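/- arXiv:1406.2084 — 5 statements merged into one kernel-verified Lean document; each statement's English description precedes it below -/
import Mathlib

section
/- Let λ be a cardinal and let (κ_δ)_{δ<λ} be cardinals each of which is either equal to 2 or an infinite regular cardinal. Then there exist a pseudo-tree T with a least element and an ultrafilter U on Treealg T such that (U,⊇) ≡_T (∏^w_{δ<λ} κ_δ, ≤). -/
open Cardinal

/-- A subset `X` of a preorder is cofinal if every element has an upper bound in `X`. -/
def TCofinal {P : Type*} [Preorder P] (X : Set P) : Prop :=
  ∀ p : P, ∃ x ∈ X, p ≤ x

/-- A map is cofinal if it sends cofinal sets to cofinal sets. -/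
def TCofinalMap {P Q : Type*} [Preorder P] [Preorder Q] (f : P → Q) : Prop :=
  ∀ X : Set P, TCofinal X → TCofinal (f '' X)

/-- `P ≤_T Q`: there is a cofinal map from `Q` to `P`. -/
def TukeyLE (P Q : Type*) [Preorder P] [Preorder Q] : Prop :=
  ∃ f : Q → P, TCofinalMap f

/-- Tukey equivalence. -/
def TukeyEquiv (P Q : Type*) [Preorder P] [Preorder Q] : Prop :=
  TukeyLE P Q ∧ TukeyLE Q P

/-- An ultrafilter on a Boolean algebra `B` of subsets of `X` (a field of sets):
a subset of `B` omitting `∅`, closed under intersection, upward closed in `B`, and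
containing `s` or `sᶜ` for each `s ∈ B`; regarded as the partial order `(U,⊇)`. -/
structure SetUltrafilter {X : Type*} (B : Set (Set X)) where
  carrier : Set (Set X)
  subset_alg : carrier ⊆ B
  empty_not_mem : ∅ ∉ carrier
  inter_mem : ∀ a ∈ carrier, ∀ b ∈ carrier, a ∩ b ∈ carrier
  up_closed : ∀ a ∈ carrier, ∀ b ∈ B, a ⊆ b → b ∈ carrier
  mem_or_compl_mem : ∀ b ∈ B, b ∈ carrier ∨ bᶜ ∈ carrier

/-- The Boolean subalgebra of the powerset algebra of `X` generated by a family `G`. -/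
def genBoolAlg {X : Type*} (G : Set (Set X)) : Set (Set X) :=
  ⋂₀ {B : Set (Set X) | G ⊆ B ∧ ∅ ∈ B ∧ (∀ s ∈ B, sᶜ ∈ B) ∧ (∀ s ∈ B, ∀ t ∈ B, s ∩ t ∈ B)}

/-- The (pseudo-)tree algebra of a partial order `T`: the subalgebra of the powerset
algebra of `T` generated by the cones `T↑t = {s : s ≥ t}`. -/
def treealg (T : Type*) [PartialOrder T] : Set (Set T) :=
  genBoolAlg {s : Set T | ∃ t : T, s = Set.Ici t}

/-- The weak product `∏^w_{i ∈ I} κ i`: finitely supported choices of an ordinal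
`f i < κ i` in each coordinate, ordered pointwise. -/
def WeakProd {I : Type*} (κ : I → Cardinal) : Type _ :=
  {f : I → Ordinal // (∀ i, f i < (κ i).ord) ∧ {i | f i ≠ 0}.Finite}

noncomputable instance {I : Type*} (κ : I → Cardinal) : PartialOrder (WeakProd κ) :=
  Subtype.partialOrder _

universe u

namespace Stmt15Aux

section boolalg

variable {X : Type*}

lemma gen_sub {G : Set (Set X)} : G ⊆ genBoolAlg G := by
  intro s hs
  exact Set.mem_sInter.mpr fun B hB => hB.1 hs

lemma empty_mem' {G : Set (Set X)} : ∅ ∈ genBoolAlg G :=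
  Set.mem_sInter.mpr fun B hB => hB.2.1

lemma compl_mem' {G : Set (Set X)} {s : Set X} (h : s ∈ genBoolAlg G) : sᶜ ∈ genBoolAlg G :=
  Set.mem_sInter.mpr fun B hB => hB.2.2.1 s (Set.mem_sInter.mp h B hB)

lemma inter_mem' {G : Set (Set X)} {s t : Set X} (hs : s ∈ genBoolAlg G)
    (ht : t ∈ genBoolAlg G) : s ∩ t ∈ genBoolAlg G :=
  Set.mem_sInter.mpr fun B hB =>
    hB.2.2.2 s (Set.mem_sInter.mp hs B hB) t (Set.mem_sInter.mp ht B hB)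

lemma univ_mem' {G : Set (Set X)} : (Set.univ : Set X) ∈ genBoolAlg G := by
  have := compl_mem' (G := G) empty_mem'
  simpa using this

lemma sub_of_closed {G S : Set (Set X)} (h1 : G ⊆ S) (h2 : ∅ ∈ S)
    (h3 : ∀ s ∈ S, sᶜ ∈ S) (h4 : ∀ s ∈ S, ∀ t ∈ S, s ∩ t ∈ S) : genBoolAlg G ⊆ S :=
  fun _ hx => Set.mem_sInter.mp hx S ⟨h1, h2, h3, h4⟩

lemma biInter_mem' {G : Set (Set X)} {J : Type*} {F : Set J} (hF : F.Finite) {s : J → Set X}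
    (hs : ∀ j ∈ F, s j ∈ genBoolAlg G) : (⋂ j ∈ F, s j) ∈ genBoolAlg G := by
  revert hs
  refine Set.Finite.induction_on F hF (fun _ => ?_) ?_
  · simpa using univ_mem' (G := G)
  · intro a F' _ _ ih hs
    rw [Set.biInter_insert]
    exact inter_mem' (hs a (Set.mem_insert _ _))
      (ih fun j hj => hs j (Set.mem_insert_of_mem _ hj))

end boolalg

section tree

variable {I : Type u}

/-- The ordinal value of a point of a branch. -/
noncomputable def bval {κ : I → Cardinal.{u}} (p : Σ δ : I, (κ δ).ord.ToType) : Ordinal.{u} :=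
  ((Ordinal.ToType.mk (o := (κ p.1).ord)).symm p.2 : Set.Iio ((κ p.1).ord))

lemma bval_lt {κ : I → Cardinal.{u}} (p : Σ δ : I, (κ δ).ord.ToType) :
    bval p < (κ p.1).ord :=
  ((Ordinal.ToType.mk (o := (κ p.1).ord)).symm p.2).2

lemma bval_inj {κ : I → Cardinal.{u}} {p q : Σ δ : I, (κ δ).ord.ToType}
    (h1 : p.1 = q.1) (h2 : bval p = bval q) : p = q := by
  obtain ⟨a, x⟩ := p
  obtain ⟨b, y⟩ := q
  dsimp at h1
  subst h1
  have hxy : (Ordinal.ToType.mk (o := (κ a).ord)).symm x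
      = (Ordinal.ToType.mk (o := (κ a).ord)).symm y := Subtype.ext h2
  have : x = y := (Ordinal.ToType.mk (o := (κ a).ord)).symm.injective hxy
  subst this
  rfl

/-- The pseudo-tree: a root `none` together with, above the root, for each `δ`,
a chain which is the reverse of `(κ δ).ord`. -/
def BrT (κ : I → Cardinal.{u}) : Type u := Option (Σ δ : I, (κ δ).ord.ToType)

/-- Inclusion of branch points into the tree. -/
def sm {κ : I → Cardinal.{u}} (p : Σ δ : I, (κ δ).ord.ToType) : BrT κ := some p

noncomputable instance instBrT (κ : I → Cardinal.{u}) : PartialOrder (BrT κ) where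
  le x y := ∀ p, x = some p → ∃ q, y = some q ∧ p.1 = q.1 ∧ bval q ≤ bval p
  le_refl x := fun p h => ⟨p, h, rfl, le_rfl⟩
  le_trans x y z hxy hyz := by
    intro p hx
    obtain ⟨q, hy, h1, h2⟩ := hxy p hx
    obtain ⟨r, hz, h3, h4⟩ := hyz q hy
    exact ⟨r, hz, h1.trans h3, h4.trans h2⟩
  le_antisymm x y h1 h2 := by
    cases x with
    | none =>
        cases y with
        | none => rfl
        | some q =>
            obtain ⟨r, hr, -, -⟩ := h2 q rfl
            exact absurd hr (by simp)
    | some p =>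
        obtain ⟨q, hq, e1, l1⟩ := h1 p rfl
        obtain ⟨r, hr, e2, l2⟩ := h2 q hq
        have hrp : r = p := (Option.some.inj hr).symm
        subst hrp
        rw [hq]
        exact congrArg some (bval_inj e1 (le_antisymm l2 l1))

variable {κ : I → Cardinal.{u}}

lemma none_le (x : BrT κ) : @LE.le (BrT κ) _ none x := fun p h => absurd h (by simp)

lemma some_le_some {p q : Σ δ : I, (κ δ).ord.ToType} :
    @LE.le (BrT κ) _ (some p) (some q) ↔ p.1 = q.1 ∧ bval q ≤ bval p := by
  constructor
  · intro h
    obtain ⟨r, hr, e, l⟩ := h p rfl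
    obtain rfl : q = r := Option.some.inj hr
    exact ⟨e, l⟩
  · rintro ⟨e, l⟩ p' hp'
    obtain rfl : p = p' := Option.some.inj hp'
    exact ⟨q, rfl, e, l⟩

lemma not_some_le_none {p : Σ δ : I, (κ δ).ord.ToType} : ¬ @LE.le (BrT κ) _ (some p) none := by
  intro h
  obtain ⟨q, hq, -, -⟩ := h p rfl
  simp at hq

lemma le_none_iff {x : BrT κ} : @LE.le (BrT κ) _ x none ↔ x = none := by
  cases x with
  | none => exact iff_of_true (le_refl _) rfl
  | some p => simp [not_some_le_none]

lemma brt_chain (t : BrT κ) : IsChain (· ≤ ·) {s : BrT κ | s ≤ t} := by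
  intro x hx y hy hxy
  cases x with
  | none => exact Or.inl (none_le y)
  | some p =>
      cases y with
      | none => exact Or.inr (none_le _)
      | some q =>
          cases t with
          | none => exact absurd (le_none_iff.mp hx) (by simp)
          | some r =>
              obtain ⟨e1, -⟩ := some_le_some.mp hx
              obtain ⟨e2, -⟩ := some_le_some.mp hy
              rcases le_total (bval p) (bval q) with h | h
              · exact Or.inr (some_le_some.mpr ⟨e2.trans e1.symm, h⟩)
              · exact Or.inl (some_le_some.mpr ⟨e1.trans e2.symm, h⟩)

end tree

section weak

variable {I : Type u} {κ : I → Cardinal.{u}}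

lemma wle_iff {f g : WeakProd κ} : f ≤ g ↔ ∀ i, f.1 i ≤ g.1 i :=
  ⟨fun h i => h i, fun h i => h i⟩

noncomputable def wzero (h : ∀ i, 1 < (κ i).ord) : WeakProd κ :=
  ⟨fun _ => 0, fun i => zero_lt_one.trans (h i), by simp⟩

noncomputable def wmax (f g : WeakProd κ) : WeakProd κ :=
  ⟨fun i => max (f.1 i) (g.1 i), fun i => max_lt (f.2.1 i) (g.2.1 i), by
    refine (f.2.2.union g.2.2).subset ?_
    intro i hi
    by_contra h
    simp only [Set.mem_union, Set.mem_setOf_eq, not_or, not_not] at h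
    exact hi (by simp [Set.mem_setOf_eq, h.1, h.2])⟩

lemma le_wmax_left (f g : WeakProd κ) : f ≤ wmax f g :=
  wle_iff.mpr fun i => le_max_left _ _

lemma le_wmax_right (f g : WeakProd κ) : g ≤ wmax f g :=
  wle_iff.mpr fun i => le_max_right _ _

/-- The basic element of the ultrafilter associated to `f`. -/
def bset (κ : I → Cardinal.{u}) (f : WeakProd κ) : Set (BrT κ) :=
  {x | ∀ p, x = some p → f.1 p.1 = 0 ∨ f.1 p.1 < bval p}

lemma none_mem_bset (f : WeakProd κ) : (none : BrT κ) ∈ bset κ f := by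
  intro p hp
  simp at hp

noncomputable def ptOf (κ : I → Cardinal.{u}) (δ : I) (α : Ordinal.{u})
    (h : α < (κ δ).ord) : Σ δ : I, (κ δ).ord.ToType :=
  ⟨δ, Ordinal.ToType.mk (o := (κ δ).ord) ⟨α, h⟩⟩

lemma bval_ptOf {δ : I} {α : Ordinal.{u}} {h : α < (κ δ).ord} :
    bval (ptOf κ δ α h) = α := by
  simp [bval, ptOf]
  exact congrArg Subtype.val ((Ordinal.ToType.mk).symm_apply_apply _)

lemma bset_subset_iff {f g : WeakProd κ} : bset κ g ⊆ bset κ f ↔ f ≤ g := by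
  constructor
  · intro h
    rw [wle_iff]
    intro i
    by_contra hc
    push_neg at hc
    have hf0 : f.1 i ≠ 0 := fun h0 => (zero_le (a := g.1 i)).not_gt (lt_of_lt_of_eq hc h0)
    have hx : (some (ptOf κ i (f.1 i) (f.2.1 i)) : BrT κ) ∈ bset κ g := by
      rintro p hp
      obtain rfl : ptOf κ i (f.1 i) (f.2.1 i) = p := Option.some.inj hp
      right
      rw [bval_ptOf]
      exact hc
    have h2 := h hx _ rfl
    rw [bval_ptOf] at h2
    rcases h2 with h2 | h2
    · exact hf0 h2
    · exact lt_irrefl _ h2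
  · intro hle x hx p hp
    have hle' := wle_iff.mp hle
    rcases hx p hp with h0 | hlt
    · left
      exact nonpos_iff_eq_zero.mp (le_of_le_of_eq (hle' p.1) h0)
    · exact Or.inr (lt_of_le_of_lt (hle' p.1) hlt)

lemma bset_mem_treealg (f : WeakProd κ) : bset κ f ∈ treealg (BrT κ) := by
  have heq : bset κ f =
      ⋂ δ ∈ {i | f.1 i ≠ 0},
        (Set.Ici (sm (ptOf κ δ (f.1 δ) (f.2.1 δ))))ᶜ := by
    ext x
    simp only [Set.mem_iInter, Set.mem_compl_iff, Set.mem_Ici, Set.mem_setOf_eq]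
    constructor
    · intro hx δ hδ hle
      obtain ⟨q, hq, e, l⟩ := hle _ rfl
      rw [bval_ptOf] at l
      rcases hx q hq with h0 | hlt
      · rw [← e] at h0
        exact hδ h0
      · rw [← e] at hlt
        exact absurd (lt_of_lt_of_le hlt l) (lt_irrefl _)
    · intro hx p hp
      by_cases h0 : f.1 p.1 = 0
      · exact Or.inl h0
      · right
        by_contra hlt
        push_neg at hlt
        refine hx p.1 h0 ?_
        rw [hp]
        refine some_le_some.mpr ⟨rfl, ?_⟩
        rw [bval_ptOf]
        exact hlt
  rw [heq]
  exact biInter_mem' f.2.2 fun j hj => compl_mem' (gen_sub ⟨_, rfl⟩)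

lemma key (h1 : ∀ i, 1 < (κ i).ord) :
    ∀ b ∈ treealg (BrT κ),
      ((none : BrT κ) ∈ b → ∃ f : WeakProd κ, bset κ f ⊆ b) ∧
        ((none : BrT κ) ∉ b → ∃ f : WeakProd κ, bset κ f ∩ b = ∅) := by
  have main : treealg (BrT κ) ⊆ {b : Set (BrT κ) |
      ((none : BrT κ) ∈ b → ∃ f : WeakProd κ, bset κ f ⊆ b) ∧
      ((none : BrT κ) ∉ b → ∃ f : WeakProd κ, bset κ f ∩ b = ∅)} := by
    classical
    refine sub_of_closed ?_ ?_ ?_ ?_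
    · -- generators
      rintro s ⟨t, rfl⟩
      simp only [Set.mem_setOf_eq]
      cases t with
      | none =>
          constructor
          · intro _
            exact ⟨wzero h1, fun x _ => none_le x⟩
          · intro hn
            exact absurd (none_le (none : BrT κ)) hn
      | some p =>
          constructor
          · intro hn
            exact absurd hn not_some_le_none
          · intro _
            refine ⟨⟨fun i => if i = p.1 then max (bval p) 1 else 0, ?_, ?_⟩, ?_⟩
            · intro i
              dsimp only
              split_ifs with h
              · subst h
                exact max_lt (bval_lt p) (h1 _)
              · exact zero_lt_one.trans (h1 i)
            · refine (Set.finite_singleton p.1).subset ?_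
              intro i hi
              simp only [Set.mem_setOf_eq] at hi
              by_contra hne
              simp only [Set.mem_singleton_iff] at hne
              rw [if_neg hne] at hi
              exact hi rfl
            · rw [Set.eq_empty_iff_forall_notMem]
              rintro x ⟨hx1, hx2⟩
              obtain ⟨q, hq, e, l⟩ := hx2 p rfl
              rcases hx1 q hq with h0 | hlt
              · dsimp only at h0
                rw [if_pos e.symm] at h0
                rw [Ordinal.max_eq_zero] at h0
                exact one_ne_zero h0.2
              · dsimp only at hlt
                rw [if_pos e.symm] at hlt
                exact absurd ((le_max_left _ _).trans_lt (hlt.trans_le l))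
                  (lt_irrefl _)
    · -- empty set
      simp only [Set.mem_setOf_eq]
      constructor
      · intro hn
        exact absurd hn (Set.notMem_empty _)
      · intro _
        exact ⟨wzero h1, Set.inter_empty _⟩
    · -- complement
      rintro s ⟨hs1, hs2⟩
      simp only [Set.mem_setOf_eq]
      constructor
      · intro hn
        obtain ⟨f, hf⟩ := hs2 hn
        refine ⟨f, fun x hx hxs => ?_⟩
        exact Set.eq_empty_iff_forall_notMem.mp hf x ⟨hx, hxs⟩
      · intro hn
        obtain ⟨f, hf⟩ := hs1 (Set.notMem_compl_iff.mp hn)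
        refine ⟨f, Set.eq_empty_iff_forall_notMem.mpr ?_⟩
        rintro x ⟨hx1, hx2⟩
        exact hx2 (hf hx1)
    · -- intersection
      rintro s ⟨hs1, hs2⟩ t ⟨ht1, ht2⟩
      simp only [Set.mem_setOf_eq]
      constructor
      · rintro ⟨hns, hnt⟩
        obtain ⟨f, hf⟩ := hs1 hns
        obtain ⟨g, hg⟩ := ht1 hnt
        refine ⟨wmax f g, fun x hx => ?_⟩
        exact ⟨hf (bset_subset_iff.mpr (le_wmax_left f g) hx),
          hg (bset_subset_iff.mpr (le_wmax_right f g) hx)⟩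
      · intro hn
        by_cases hs : (none : BrT κ) ∈ s
        · have hnt : (none : BrT κ) ∉ t := fun ht => hn ⟨hs, ht⟩
          obtain ⟨g, hg⟩ := ht2 hnt
          refine ⟨g, Set.eq_empty_iff_forall_notMem.mpr ?_⟩
          rintro x ⟨hx1, hx2, hx3⟩
          exact Set.eq_empty_iff_forall_notMem.mp hg x ⟨hx1, hx3⟩
        · obtain ⟨f, hf⟩ := hs2 hs
          refine ⟨f, Set.eq_empty_iff_forall_notMem.mpr ?_⟩
          rintro x ⟨hx1, hx2, hx3⟩
          exact Set.eq_empty_iff_forall_notMem.mp hf x ⟨hx1, hx2⟩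
  exact fun b hb => main hb

end weak

end Stmt15Aux

open Stmt15Aux

/-- For any cardinal `λ` and cardinals `κ_δ (δ < λ)`, each equal to `2` or
an infinite regular cardinal, there is a pseudo-tree `T` with a least element and an
ultrafilter `U` on `Treealg T` with `(U,⊇) ≡_T (∏^w_{δ<λ} κ_δ, ≤)`. -/
theorem stmt15 (lam : Cardinal.{u}) (κ : lam.ord.ToType → Cardinal.{u})
    (hκ : ∀ δ, κ δ = 2 ∨ (ℵ₀ ≤ κ δ ∧ (κ δ).IsRegular)) :
    ∃ (T : Type u) (inst : PartialOrder T),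
      letI := inst
      (∀ t : T, IsChain (· ≤ ·) {s : T | s ≤ t}) ∧
        (∃ bot : T, ∀ t : T, bot ≤ t) ∧
        ∃ U : SetUltrafilter (treealg T),
          TukeyEquiv ((↥U.carrier)ᵒᵈ) (WeakProd κ) := by
  have h1 : ∀ δ, 1 < (κ δ).ord := by
    intro δ
    rcases hκ δ with h | ⟨h, -⟩
    · rw [h]
      have : ((2 : ℕ) : Cardinal).ord = ((2 : ℕ) : Ordinal) := Cardinal.ord_nat 2
      rw [show (2 : Cardinal) = ((2 : ℕ) : Cardinal) by norm_num, this]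
      norm_num
    · calc (1 : Ordinal) < Cardinal.aleph0.ord := by
            rw [Cardinal.ord_aleph0]
            exact Ordinal.one_lt_omega0
        _ ≤ (κ δ).ord := Cardinal.ord_le_ord.mpr h
  refine ⟨BrT κ, instBrT κ, brt_chain, ⟨none, none_le⟩, ?_⟩
  set U : SetUltrafilter (treealg (BrT κ)) :=
    { carrier := {b | b ∈ treealg (BrT κ) ∧ (none : BrT κ) ∈ b}
      subset_alg := fun b hb => hb.1
      empty_not_mem := fun h => h.2
      inter_mem := fun a ha b hb => ⟨inter_mem' ha.1 hb.1, ha.2, hb.2⟩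
      up_closed := fun a ha b hb hab => ⟨hb, hab ha.2⟩
      mem_or_compl_mem := fun b hb => by
        by_cases h : (none : BrT κ) ∈ b
        · exact Or.inl ⟨hb, h⟩
        · exact Or.inr ⟨compl_mem' hb, h⟩ } with hU
  refine ⟨U, ?_, ?_⟩
  · -- TukeyLE (U.carrierᵒᵈ) (WeakProd κ) : map WeakProd → Uᵒᵈ
    refine ⟨fun f => (⟨bset κ f, bset_mem_treealg f, none_mem_bset f⟩ : ↥U.carrier), ?_⟩
    intro X hX b
    obtain ⟨f0, hf0⟩ := (key h1 (OrderDual.ofDual b).1 (OrderDual.ofDual b).2.1).1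
      (OrderDual.ofDual b).2.2
    obtain ⟨x, hxX, hx⟩ := hX f0
    refine ⟨_, Set.mem_image_of_mem _ hxX, ?_⟩
    show ((⟨bset κ x, bset_mem_treealg x, none_mem_bset x⟩ : ↥U.carrier) : Set (BrT κ))
      ⊆ (OrderDual.ofDual b).1
    exact fun y hy => hf0 (bset_subset_iff.mpr hx hy)
  · -- TukeyLE (WeakProd κ) (U.carrierᵒᵈ) : map Uᵒᵈ → WeakProd
    have hex : ∀ b : ↥U.carrier, ∃ f : WeakProd κ, bset κ f ⊆ b.1 :=
      fun b => (key h1 b.1 b.2.1).1 b.2.2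
    choose h hh using hex
    refine ⟨fun b => h (OrderDual.ofDual b), ?_⟩
    intro X hX p
    obtain ⟨x, hxX, hx⟩ := hX (OrderDual.toDual
      (⟨bset κ p, bset_mem_treealg p, none_mem_bset p⟩ : ↥U.carrier))
    refine ⟨h (OrderDual.ofDual x), Set.mem_image_of_mem _ hxX, ?_⟩
    have hsub : (OrderDual.ofDual x).1 ⊆ bset κ p := hx
    exact bset_subset_iff.mp (fun y hy => hsub (hh (OrderDual.ofDual x) hy))
end

section
/- Let T be a pseudo-tree, let C be an initial chain in T, and let S be any set of approximate immediate successors of C. Then there exist a cardinal λ, cardinals θ_α (α < λ) each equal to 1 or an infinite regular cardinal, and a λ-fan Λ = {t^α_β : α < λ, β < θ_α} above C which is coinitial in S: every element of Λ lies below some element of S, and every element of S lies above some element of Λ. -/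
open Cardinal

/-- `R` is a set of approximate immediate successors of the initial chain `C`:
every `r ∈ R` is above `C` (i.e. `c < r` for all `c ∈ C`), and every element above `C`
is above some member of `R`. -/
def ApproxImmSucc {T : Type*} [Preorder T] (C R : Set T) : Prop :=
  (∀ r ∈ R, ∀ c ∈ C, c < r) ∧ ∀ s : T, (∀ c ∈ C, c < s) → ∃ r ∈ R, r ≤ s

/-- A `λ`-fan above an initial chain `C` in a pseudo-tree, presented as a doubly indexed
family `t α β` (`α < λ`, `β < θ α`): the family is a set of approximate immediate
successors of `C`; each `θ α` is `1` or an infinite regular cardinal; each column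
`(t α β)_{β < θ α}` is strictly decreasing and coinitial in
`{s : C < s ≤ t α 0}` (equivalently, in the set of elements above `C` lying below some
member of the column); and elements of distinct columns are incomparable. -/
structure IsLambdaFan {T : Type*} [PartialOrder T] (C : Set T) (lam : Cardinal)
    (θ : lam.ord.ToType → Cardinal)
    (t : (α : lam.ord.ToType) → (θ α).ord.ToType → T) : Prop where
  above : ∀ α β, ∀ c ∈ C, c < t α β
  approx : ∀ s : T, (∀ c ∈ C, c < s) → ∃ α β, t α β ≤ s
  theta : ∀ α, θ α = 1 ∨ (ℵ₀ ≤ θ α ∧ (θ α).IsRegular)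
  strictAnti : ∀ α, StrictAnti (t α)
  coinitial : ∀ α, ∀ s : T, (∀ c ∈ C, c < s) → (∃ β, s ≤ t α β) → ∃ β, t α β ≤ s
  incomp : ∀ α α', α ≠ α' → ∀ β β', ¬t α β ≤ t α' β' ∧ ¬t α' β' ≤ t α β

universe u

open Ordinal in
private lemma exists_cofinal_strictMono (L : Type u) [LinearOrder L] [Nonempty L] :
    ∃ θ : Cardinal.{u}, (θ = 1 ∨ ℵ₀ ≤ θ ∧ θ.IsRegular) ∧
      ∃ f : θ.ord.ToType → L, StrictMono f ∧ ∀ b : L, ∃ β, b ≤ f β := by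
  classical
  by_cases hmax : ∃ m : L, ∀ b, b ≤ m
  · obtain ⟨m, hm⟩ := hmax
    have hsub : Subsingleton ((1 : Cardinal.{u}).ord.ToType) := by
      rw [← Cardinal.le_one_iff_subsingleton, Cardinal.mk_toType, Cardinal.card_ord]
    have hne : Nonempty ((1 : Cardinal.{u}).ord.ToType) := by
      rw [Ordinal.toType_nonempty_iff_ne_zero, ne_eq, Cardinal.ord_eq_zero]
      exact one_ne_zero
    refine ⟨1, Or.inl rfl, fun _ => m, fun a b hab => ?_, fun b => ⟨hne.some, hm b⟩⟩
    exact absurd (Subsingleton.elim a b) hab.ne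
  · push_neg at hmax
    obtain ⟨e⟩ : Nonempty ((#L).ord.ToType ≃ L) :=
      Cardinal.eq.1 (by rw [Cardinal.mk_toType, Cardinal.card_ord])
    haveI hwo1 : IsWellOrder ((#L).ord.ToType) ((· < ·)) := isWellOrder_lt
    set A : Set ((#L).ord.ToType) := {i | ∀ j, j < i → e j < e i} with hA
    have wf : WellFounded ((· < ·) : (#L).ord.ToType → (#L).ord.ToType → Prop) :=
      IsWellFounded.wf
    have key : ∀ b : L, ∃ i ∈ A, b ≤ e i := by
      intro b
      have hSne : {i : (#L).ord.ToType | b ≤ e i}.Nonempty := ⟨e.symm b, by simp⟩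
      refine ⟨wf.min _ hSne, ?_, wf.min_mem _ hSne⟩
      intro j hj
      have hj' : j ∉ {i : (#L).ord.ToType | b ≤ e i} := fun hmem =>
        wf.not_lt_min _ hmem hj
      have : ¬ b ≤ e j := hj'
      exact lt_of_lt_of_le (not_le.1 this) (wf.min_mem _ hSne)
    have emono : ∀ {i j : (#L).ord.ToType}, i ∈ A → j ≤ i → e j ≤ e i := by
      intro i j hi hij
      rcases hij.lt_or_eq with h | h
      · exact (hi j h).le
      · rw [h]
    haveI hwo2 : IsWellOrder A (Subrel ((· < ·) : (#L).ord.ToType → _ → Prop) A) :=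
      RelEmbedding.isWellOrder (Subrel.relEmbedding _ _)
    haveI hwo2' : IsWellOrder (Subtype A) (Subrel ((· < ·) : (#L).ord.ToType → _ → Prop) A) :=
      hwo2
    set δ := Ordinal.type (Subrel ((· < ·) : (#L).ord.ToType → _ → Prop) A) with hδ
    have hAne : Nonempty A := by
      obtain ⟨i, hi, _⟩ := key (Classical.arbitrary L)
      exact ⟨⟨i, hi⟩⟩
    have hδ0 : δ ≠ 0 := by
      rw [hδ, Ordinal.type_ne_zero_iff_nonempty]
      exact hAne
    have hlim : Order.IsSuccLimit δ := by
      refine Ordinal.isSuccLimit_iff.2 ⟨hδ0, Order.isSuccPrelimit_of_succ_lt fun a ha => ?_⟩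
      obtain ⟨x, hx⟩ := Ordinal.typein_surj _ ha
      obtain ⟨b, hb⟩ := hmax (e x.1)
      obtain ⟨i, hiA, hbi⟩ := key b
      have hxi : x.1 < i := by
        rcases lt_trichotomy x.1 i with h | h | h
        · exact h
        · exact absurd (congrArg e h) (hb.trans_le hbi).ne
        · exact absurd (x.2 i h) (hb.trans_le hbi).asymm
      have hrel : Subrel ((· < ·) : (#L).ord.ToType → _ → Prop) A x ⟨i, hiA⟩ := hxi
      calc Order.succ a = Order.succ (Ordinal.typein _ x) := by rw [hx]
        _ ≤ Ordinal.typein _ (⟨i, hiA⟩ : A) :=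
            Order.succ_le_iff.2 ((Ordinal.typein_lt_typein _).2 hrel)
        _ < δ := Ordinal.typein_lt_type _ _
    have hreg : (δ.cof).IsRegular :=
      Cardinal.isRegular_cof hlim
    haveI hwo3 : IsWellOrder ((δ.cof).ord.ToType) ((· < ·)) := isWellOrder_lt
    obtain ⟨Sc, hScUnb, hSctype⟩ :=
      Ordinal.exists_ord_cof_eq A
    obtain ⟨k⟩ : Nonempty (((· < ·) : (δ.cof).ord.ToType → _ → Prop) ≃r
        ((· < ·) : Sc → Sc → Prop)) := by
      refine Ordinal.type_eq.1 ?_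
      rw [hSctype, Ordinal.type_toType, ← Ordinal.cof_type]
      rfl
    refine ⟨δ.cof, Or.inr ⟨hreg.1, hreg⟩, fun β => e ((k β).1.1), ?_, ?_⟩
    · intro β β' hββ'
      have h2 : k β < k β' :=
        k.map_rel_iff.2 hββ'
      exact (k β').1.2 _ h2
    · intro b
      obtain ⟨i, hiA, hbi⟩ := key b
      obtain ⟨x, hxSc, hx⟩ := hScUnb ⟨i, hiA⟩
      refine ⟨k.symm ⟨x, hxSc⟩, ?_⟩
      have hk : k (k.symm ⟨x, hxSc⟩) = ⟨x, hxSc⟩ := k.apply_symm_apply _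
      show b ≤ e ((k (k.symm ⟨x, hxSc⟩)).1.1)
      rw [hk]
      have : i ≤ x.1 := hx
      exact hbi.trans (emono x.2 this)

private lemma exists_coinitial_strictAnti (L : Type u) [LinearOrder L] [Nonempty L] :
    ∃ θ : Cardinal.{u}, (θ = 1 ∨ ℵ₀ ≤ θ ∧ θ.IsRegular) ∧
      ∃ f : θ.ord.ToType → L, StrictAnti f ∧ ∀ b : L, ∃ β, f β ≤ b := by
  obtain ⟨θ, hθ, f, hf1, hf2⟩ := exists_cofinal_strictMono (Lᵒᵈ)
  exact ⟨θ, hθ, fun β => OrderDual.ofDual (f β), fun a b h => hf1 h,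
    fun b => hf2 (OrderDual.toDual b)⟩

private noncomputable def chainLinearOrder {T : Type u} [PartialOrder T] {B : Set T}
    (h : IsChain (· ≤ ·) B) : LinearOrder B :=
  { (inferInstance : PartialOrder B) with
    le_total := fun a b => h.total a.2 b.2
    toDecidableLE := Classical.decRel _ }

private lemma chain_coinitial {T : Type u} [PartialOrder T] {B : Set T}
    (hB : IsChain (· ≤ ·) B) (hne : B.Nonempty) :
    ∃ θ : Cardinal.{u}, (θ = 1 ∨ ℵ₀ ≤ θ ∧ θ.IsRegular) ∧
      ∃ f : θ.ord.ToType → T, (∀ β, f β ∈ B) ∧ StrictAnti f ∧ ∀ b ∈ B, ∃ β, f β ≤ b := by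
  letI := chainLinearOrder hB
  haveI : Nonempty B := hne.to_subtype
  obtain ⟨θ, hθ, f, hf1, hf2⟩ := exists_coinitial_strictAnti B
  refine ⟨θ, hθ, fun β => (f β).1, fun β => (f β).2, fun a b h => ?_, fun b hb => ?_⟩
  · have h2 := lt_iff_le_not_ge.1 (hf1 h)
    exact lt_iff_le_not_ge.2 ⟨h2.1, fun hc => h2.2 hc⟩
  · obtain ⟨β, hβ⟩ := hf2 ⟨b, hb⟩
    exact ⟨β, hβ⟩

/-- In a pseudo-tree `T`, for every initial chain `C` and every set `S` of
approximate immediate successors of `C`, there is a `λ`-fan above `C` which is coinitial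
in `S`: every fan element lies below some element of `S` and every element of `S` lies
above some fan element. -/
theorem stmt16 {T : Type u} [PartialOrder T]
    (hpt : ∀ x : T, IsChain (· ≤ ·) {s : T | s ≤ x})
    (C : Set T) (hCne : C.Nonempty) (hCchain : IsChain (· ≤ ·) C) (hClower : IsLowerSet C)
    (S : Set T) (hS : ApproxImmSucc C S) :
    ∃ (lam : Cardinal.{u}) (θ : lam.ord.ToType → Cardinal.{u})
      (t : (α : lam.ord.ToType) → (θ α).ord.ToType → T),
      IsLambdaFan C lam θ t ∧
        (∀ α β, ∃ s ∈ S, t α β ≤ s) ∧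
        (∀ s ∈ S, ∃ α β, t α β ≤ s) := by
  classical
  set A : Set T := {s | ∀ c ∈ C, c < s} with hA
  have hSsubA : ∀ x : S, (x : T) ∈ A := fun x c hc => hS.1 x x.2 c hc
  let rel : S → S → Prop := fun r s => ∃ u ∈ A, u ≤ (r : T) ∧ u ≤ (s : T)
  have hrefl : ∀ r : S, rel r r := fun r => ⟨r, hSsubA r, le_rfl, le_rfl⟩
  have hsymm : ∀ {r s : S}, rel r s → rel s r := by
    rintro r s ⟨u, h1, h2, h3⟩; exact ⟨u, h1, h3, h2⟩
  have htrans : ∀ {r s w : S}, rel r s → rel s w → rel r w := by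
    rintro r s w ⟨u, hu, hur, hus⟩ ⟨v, hv, hvs, hvw⟩
    rcases (hpt s).total (hus : u ∈ {x : T | x ≤ (s : T)}) (hvs : v ∈ {x : T | x ≤ (s : T)})
      with h | h
    · exact ⟨u, hu, hur, h.trans hvw⟩
    · exact ⟨v, hv, h.trans hur, hvw⟩
  let st : Setoid S := ⟨rel, ⟨hrefl, hsymm, htrans⟩⟩
  let Q := Quotient st
  obtain ⟨eQ⟩ : Nonempty ((#Q).ord.ToType ≃ Q) :=
    Cardinal.eq.1 (by rw [Cardinal.mk_toType, Cardinal.card_ord])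
  let rep : (#Q).ord.ToType → S := fun α => (eQ α).out
  have hrep : ∀ x : S, rel (rep (eQ.symm (Quotient.mk st x))) x := by
    intro x
    have h1 : Quotient.mk st (rep (eQ.symm (Quotient.mk st x))) = Quotient.mk st x := by
      show Quotient.mk st (eQ (eQ.symm (Quotient.mk st x))).out = Quotient.mk st x
      rw [Quotient.out_eq, eQ.apply_symm_apply]
    exact Quotient.exact h1
  have hrepinj : ∀ α α', rel (rep α) (rep α') → α = α' := by
    intro α α' h
    have h1 : eQ α = eQ α' := by
      rw [← Quotient.out_eq (eQ α), ← Quotient.out_eq (eQ α')]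
      exact Quotient.sound h
    exact eQ.injective h1
  let B : (#Q).ord.ToType → Set T := fun α => {x | x ∈ A ∧ x ≤ (rep α : T)}
  have hBchain : ∀ α, IsChain (· ≤ ·) (B α) := fun α =>
    (hpt (rep α)).mono (fun x hx => hx.2)
  have hBne : ∀ α, (B α).Nonempty := fun α => ⟨rep α, hSsubA _, le_rfl⟩
  have H : ∀ α, ∃ θ : Cardinal.{u}, (θ = 1 ∨ ℵ₀ ≤ θ ∧ θ.IsRegular) ∧
      ∃ f : θ.ord.ToType → T, (∀ β, f β ∈ B α) ∧ StrictAnti f ∧ ∀ b ∈ B α, ∃ β, f β ≤ b :=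
    fun α => chain_coinitial (hBchain α) (hBne α)
  choose θ hθ t ht_mem ht_anti ht_coin using H
  have hBtoS : ∀ {α α' : (#Q).ord.ToType} {u : T}, u ∈ B α → u ≤ (rep α' : T) → α = α' := by
    intro α α' u hu hu'
    exact hrepinj α α' ⟨u, hu.1, hu.2, hu'⟩
  refine ⟨#Q, θ, t, ⟨?_, ?_, hθ, ht_anti, ?_, ?_⟩, ?_, ?_⟩
  · exact fun α β c hc => (ht_mem α β).1 c hc
  · intro s hs
    obtain ⟨r, hrS, hrs⟩ := hS.2 s hs
    set x : S := ⟨r, hrS⟩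
    set α := eQ.symm (Quotient.mk st x) with hα
    obtain ⟨u, huA, hurep, hux⟩ := hrep x
    obtain ⟨β, hβ⟩ := ht_coin α u ⟨huA, hurep⟩
    exact ⟨α, β, hβ.trans (hux.trans hrs)⟩
  · intro α s hsA hsβ
    obtain ⟨β, hβ⟩ := hsβ
    exact ht_coin α s ⟨hsA, hβ.trans (ht_mem α β).2⟩
  · intro α α' hne β β'
    constructor
    · intro h
      exact hne (hBtoS (ht_mem α β) (h.trans (ht_mem α' β').2))
    · intro h
      exact hne (hBtoS (ht_mem α' β') (h.trans (ht_mem α β).2)).symm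
  · exact fun α β => ⟨rep α, (rep α).2, (ht_mem α β).2⟩
  · intro s hs
    set x : S := ⟨s, hs⟩
    set α := eQ.symm (Quotient.mk st x) with hα
    obtain ⟨u, huA, hurep, hux⟩ := hrep x
    obtain ⟨β, hβ⟩ := ht_coin α u ⟨huA, hurep⟩
    exact ⟨α, β, hβ.trans hux⟩
end

section
/- Let T be a pseudo-tree and C an initial chain in T. If Λ = {t^α_β : α < λ, β < θ_α} is a λ-fan above C and Λ' = {u^ξ_ζ : ξ < λ', ζ < θ'_ξ} is a λ'-fan above C, then λ = λ' and there is a bijection φ : λ → λ' such that θ'_{φ(α)} = θ_α for every α < λ. In particular, the cardinal λ and the family of cardinals {θ_α : α < λ} of a λ-fan above C are uniquely determined by C. -/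
open Cardinal

universe u

section Aux

variable {T : Type*} [PartialOrder T]

lemma pt_comp (hpt : ∀ x : T, IsChain (· ≤ ·) {s : T | s ≤ x}) {x y z : T}
    (hx : x ≤ z) (hy : y ≤ z) : x ≤ y ∨ y ≤ x := by
  by_cases h : x = y
  · exact Or.inl h.le
  · exact (hpt z) hx hy h

lemma noMax_of_inf {c : Cardinal} (h : ℵ₀ ≤ c) (j : c.ord.ToType) : ∃ j', j < j' := by
  set e := Ordinal.ToType.mk (o := c.ord) with he
  have hlim : Order.IsSuccLimit c.ord := Cardinal.isSuccLimit_ord h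
  set y := e.symm j with hy
  refine ⟨e ⟨y.1 + 1, (by rw [Ordinal.add_one_eq_succ]; exact hlim.succ_lt (a := y.1) y.2)⟩, ?_⟩
  have : y < ⟨y.1 + 1, (by rw [Ordinal.add_one_eq_succ]; exact hlim.succ_lt (a := y.1) y.2)⟩ := Subtype.coe_lt_coe.mp (Order.lt_succ _)
  calc j = e y := by rw [hy, e.apply_symm_apply]
  _ < _ := e.strictMono this

/-- For infinite regular lengths: mutual coinitiality forces `κ' ≤ κ`. -/
lemma len_le {κ κ' : Cardinal} (hκ' : ℵ₀ ≤ κ' ∧ κ'.IsRegular)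
    (a : κ.ord.ToType → T) (b : κ'.ord.ToType → T)
    (hb : StrictAnti b)
    (hab : ∀ i, ∃ j, b j ≤ a i) (hba : ∀ j, ∃ i, a i ≤ b j) : κ' ≤ κ := by
  by_contra hlt
  push_neg at hlt
  choose f hf using hab
  set e := Ordinal.ToType.mk (o := κ'.ord) with he
  have hlim : Order.IsSuccLimit κ'.ord := Cardinal.isSuccLimit_ord hκ'.1
  set g : κ.ord.ToType → Ordinal := fun i => (e.symm (f i)).1 with hg
  have hglt : ∀ i, g i + 1 < κ'.ord := fun i => by rw [Ordinal.add_one_eq_succ]; exact hlim.succ_lt (e.symm (f i)).2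
  have hcard : #κ.ord.ToType < κ'.ord.cof := by
    rw [mk_toType, card_ord, hκ'.2.cof_eq]; exact hlt
  have hsup := Ordinal.iSup_lt_of_lt_cof hcard hglt
  set j₀ := e ⟨_, hsup⟩ with hj0
  have hfj : ∀ i, f i < j₀ := by
    intro i
    have h1 : g i < ⨆ i, g i + 1 :=
      lt_of_lt_of_le (Order.lt_succ _) (Ordinal.le_iSup (fun i => g i + 1) i)
    have : e.symm (f i) < (⟨_, hsup⟩ : Set.Iio κ'.ord) := h1
    calc f i = e (e.symm (f i)) := (e.apply_symm_apply _).symm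
    _ < j₀ := e.strictMono this
  obtain ⟨i, hi⟩ := hba j₀
  have hcontra : b j₀ < b (f i) := hb (hfj i)
  exact absurd ((hf i).trans hi) hcontra.not_ge

lemma len_eq {κ κ' : Cardinal}
    (hκ : κ = 1 ∨ ℵ₀ ≤ κ ∧ κ.IsRegular) (hκ' : κ' = 1 ∨ ℵ₀ ≤ κ' ∧ κ'.IsRegular)
    (a : κ.ord.ToType → T) (b : κ'.ord.ToType → T)
    (ha : StrictAnti a) (hb : StrictAnti b)
    (hab : ∀ i, ∃ j, b j ≤ a i) (hba : ∀ j, ∃ i, a i ≤ b j) : κ = κ' := by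
  -- rule out the mixed case
  have key : ∀ {μ μ' : Cardinal} (a : μ.ord.ToType → T) (b : μ'.ord.ToType → T),
      StrictAnti b → (∀ i, ∃ j, b j ≤ a i) → (∀ j, ∃ i, a i ≤ b j) →
      μ = 1 → ℵ₀ ≤ μ' → False := by
    intro μ μ' a b hb hab hba h1 hinf
    have hsub : Subsingleton μ.ord.ToType := by
      rw [← Cardinal.le_one_iff_subsingleton, mk_toType, card_ord, h1]
    have hne : Nonempty μ.ord.ToType := by
      rw [← Cardinal.mk_ne_zero_iff, mk_toType, card_ord, h1]; exact one_ne_zero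
    obtain ⟨i₀⟩ := hne
    have hconst : ∀ j, a i₀ ≤ b j := by
      intro j; obtain ⟨i, hi⟩ := hba j
      rwa [Subsingleton.elim i₀ i]
    obtain ⟨j, hj⟩ := hab i₀
    obtain ⟨j', hj'⟩ := noMax_of_inf hinf j
    exact absurd ((hconst j').trans_lt ((hb hj').trans_le hj)) (lt_irrefl _)
  rcases hκ with h1 | hreg <;> rcases hκ' with h1' | hreg'
  · rw [h1, h1']
  · exact (key a b hb hab hba h1 hreg'.1).elim
  · exact (key b a ha hba hab h1' hreg.1).elim
  · exact le_antisymm (len_le hreg b a ha hba hab) (len_le hreg' a b hb hab hba)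
end Aux

section Main

variable {T : Type*} [PartialOrder T]
variable (C : Set T)
variable {lam lam' : Cardinal}
variable {θ : lam.ord.ToType → Cardinal} {θ' : lam'.ord.ToType → Cardinal}
variable {t : (α : lam.ord.ToType) → (θ α).ord.ToType → T}
variable {u : (ξ : lam'.ord.ToType) → (θ' ξ).ord.ToType → T}

/-- If a `u`-element lies below two `t`-elements from columns `α`, the `u`-columns agree. -/
lemma fan_uniq (hpt : ∀ x : T, IsChain (· ≤ ·) {s : T | s ≤ x}) (hfan : IsLambdaFan C lam θ t) (hfan' : IsLambdaFan C lam' θ' u)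
    {α : lam.ord.ToType} {ξ ξ' : lam'.ord.ToType} {β β'} {ζ : (θ' ξ).ord.ToType}
    {ζ' : (θ' ξ').ord.ToType}
    (h1 : u ξ ζ ≤ t α β) (h2 : u ξ' ζ' ≤ t α β') : ξ = ξ' := by
  by_contra hne
  set γ := min β β' with hγ
  have e1 : u ξ ζ ≤ t α γ := h1.trans ((hfan.strictAnti α).antitone (min_le_left _ _))
  have e2 : u ξ' ζ' ≤ t α γ := h2.trans ((hfan.strictAnti α).antitone (min_le_right _ _))
  rcases pt_comp hpt e1 e2 with h | h
  · exact (hfan'.incomp ξ ξ' hne ζ ζ').1 h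
  · exact (hfan'.incomp ξ ξ' hne ζ ζ').2 h

/-- Flip: if a `u`-element lies below a `t`-element of column `α`, then some `t`-element
of column `α` lies below a `u`-element of the same column `ξ`. -/
lemma fan_flip (hfan : IsLambdaFan C lam θ t) (hfan' : IsLambdaFan C lam' θ' u)
    {α ξ β} {ζ : (θ' ξ).ord.ToType} (h : u ξ ζ ≤ t α β) :
    ∃ β', t α β' ≤ u ξ ζ := by
  obtain ⟨α₁, β₁, hle⟩ := hfan.approx (u ξ ζ) (hfan'.above ξ ζ)
  rcases eq_or_ne α₁ α with rfl | hne
  · exact ⟨β₁, hle⟩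
  · exact absurd (hle.trans h) (hfan.incomp α₁ α hne β₁ β).1

lemma fan_nonempty_idx (hfan : IsLambdaFan C lam θ t) (α : lam.ord.ToType) :
    Nonempty (θ α).ord.ToType := by
  rw [← Cardinal.mk_ne_zero_iff, mk_toType, card_ord]
  rcases hfan.theta α with h | h
  · rw [h]; exact one_ne_zero
  · exact (lt_of_lt_of_le aleph0_pos h.1).ne'

lemma fan_exists_link (hfan : IsLambdaFan C lam θ t) (hfan' : IsLambdaFan C lam' θ' u)
    (α : lam.ord.ToType) : ∃ ξ, ∃ ζ β, u ξ ζ ≤ t α β := by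
  have := fan_nonempty_idx C hfan α
  obtain ⟨β₀⟩ := this
  obtain ⟨ξ, ζ, h⟩ := hfan'.approx (t α β₀) (hfan.above α β₀)
  exact ⟨ξ, ζ, β₀, h⟩
end Main


/-- In a pseudo-tree `T`, if `Λ` is a `λ`-fan and `Λ'` a `λ'`-fan above the
same initial chain `C`, then `λ = λ'` and there is a bijection `φ : λ → λ'` with
`θ'_{φ(α)} = θ_α` for all `α`; so the cardinal data of a fan above `C` is uniquely
determined by `C`. -/
theorem stmt17 {T : Type u} [PartialOrder T]
    (hpt : ∀ x : T, IsChain (· ≤ ·) {s : T | s ≤ x})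
    (C : Set T) (hCne : C.Nonempty) (hCchain : IsChain (· ≤ ·) C) (hClower : IsLowerSet C)
    (lam lam' : Cardinal.{u})
    (θ : lam.ord.ToType → Cardinal.{u}) (θ' : lam'.ord.ToType → Cardinal.{u})
    (t : (α : lam.ord.ToType) → (θ α).ord.ToType → T)
    (u : (ξ : lam'.ord.ToType) → (θ' ξ).ord.ToType → T)
    (hfan : IsLambdaFan C lam θ t) (hfan' : IsLambdaFan C lam' θ' u) :
    lam = lam' ∧ ∃ φ : lam.ord.ToType → lam'.ord.ToType,
      Function.Bijective φ ∧ ∀ α, θ' (φ α) = θ α := by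
    classical
  have exL : ∀ α, ∃ ξ, ∃ ζ β, u ξ ζ ≤ t α β := fun α => fan_exists_link C hfan hfan' α
  have exL' : ∀ ξ, ∃ α, ∃ β ζ, t α β ≤ u ξ ζ := fun ξ => fan_exists_link C hfan' hfan ξ
  set φ : lam.ord.ToType → lam'.ord.ToType := fun α => (exL α).choose with hφdef
  set ψ : lam'.ord.ToType → lam.ord.ToType := fun ξ => (exL' ξ).choose with hψdef
  have hφ : ∀ α, ∃ ζ β, u (φ α) ζ ≤ t α β := fun α => (exL α).choose_spec
  have hψ : ∀ ξ, ∃ β ζ, t (ψ ξ) β ≤ u ξ ζ := fun ξ => (exL' ξ).choose_spec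
  have hφuniq : ∀ α ξ, (∃ ζ β, u ξ ζ ≤ t α β) → ξ = φ α := by
    rintro α ξ ⟨ζ, β, h⟩
    obtain ⟨ζ', β', h'⟩ := hφ α
    exact fan_uniq C hpt hfan hfan' h h'
  have hψuniq : ∀ ξ α, (∃ β ζ, t α β ≤ u ξ ζ) → α = ψ ξ := by
    rintro ξ α ⟨β, ζ, h⟩
    obtain ⟨β', ζ', h'⟩ := hψ ξ
    exact fan_uniq C hpt hfan' hfan h h'
  have hψφ : Function.LeftInverse ψ φ := by
    intro α
    obtain ⟨ζ, β, h⟩ := hφ α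
    obtain ⟨β', h'⟩ := fan_flip C hfan hfan' h
    exact (hψuniq (φ α) α ⟨β', ζ, h'⟩).symm
  have hφψ : Function.RightInverse ψ φ := by
    intro ξ
    obtain ⟨β, ζ, h⟩ := hψ ξ
    obtain ⟨ζ', h'⟩ := fan_flip C hfan' hfan h
    exact (hφuniq (ψ ξ) ξ ⟨ζ', β, h'⟩).symm
  have hbij : Function.Bijective φ := ⟨hψφ.injective, hφψ.surjective⟩
  have hlam : lam = lam' := by
    have := Cardinal.mk_congr (Equiv.ofBijective φ hbij)
    rwa [mk_toType, card_ord, mk_toType, card_ord] at this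
  refine ⟨hlam, φ, hbij, fun α => ?_⟩
  have hab : ∀ β, ∃ ζ, u (φ α) ζ ≤ t α β := by
    intro β
    obtain ⟨ξ₂, ζ₂, h₂⟩ := hfan'.approx (t α β) (hfan.above α β)
    have hξ := hφuniq α ξ₂ ⟨ζ₂, β, h₂⟩
    subst hξ
    exact ⟨ζ₂, h₂⟩
  have hba : ∀ ζ, ∃ β, t α β ≤ u (φ α) ζ := by
    intro ζ
    obtain ⟨ζ₀, β₀, h₀⟩ := hφ α
    set ζ₁ := max ζ ζ₀ with hζ₁
    have h₁ : u (φ α) ζ₁ ≤ t α β₀ :=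
      ((hfan'.strictAnti (φ α)).antitone (le_max_right _ _)).trans h₀
    obtain ⟨β, hβ⟩ := hfan.coinitial α (u (φ α) ζ₁) (hfan'.above _ _) ⟨β₀, h₁⟩
    exact ⟨β, hβ.trans ((hfan'.strictAnti (φ α)).antitone (le_max_left _ _))⟩
  exact len_eq (hfan'.theta (φ α)) (hfan.theta α) (u (φ α)) (t α)
    (hfan'.strictAnti (φ α)) (hfan.strictAnti α) hba hab
end

section
/- Let T be a pseudo-tree with a least element, let U be an ultrafilter on Treealg T, let C = {t ∈ T : T↑t ∈ U} be its corresponding initial chain, and let Λ = {t^α_β : α < λ, β < θ_α} be a λ-fan above C. Then (U,⊇) ≡_T (cf C × ∏^w_{α<λ}(1+θ_α), ≤), where the weak product is ordered pointwise and the product is ordered coordinatewise. In particular, every ultrafilter on a pseudo-tree algebra is Tukey equivalent to a product (μ × ∏^w_{α<λ} κ_α, ≤) in which μ is 1 or an infinite regular cardinal and each κ_α is 2 or an infinite regular cardinal. -/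
open Cardinal

/-- The cofinality of a subset `C` of a preorder: the least cardinality of a cofinal
subset of `C`. -/
noncomputable def setCof {L : Type*} [Preorder L] (C : Set L) : Cardinal :=
  sInf {c : Cardinal | ∃ D : Set L, D ⊆ C ∧ c = #↥D ∧ ∀ x ∈ C, ∃ y ∈ D, x ≤ y}

universe u


set_option linter.unusedSectionVars false

section Aux
variable {T : Type u} [PartialOrder T] [OrderBot T]

lemma ici_mem_treealg (a : T) : Set.Ici a ∈ treealg T :=
  fun _B hB => hB.1 ⟨a, rfl⟩

lemma treealg_compl {u : Set T} (h : u ∈ treealg T) : uᶜ ∈ treealg T :=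
  fun B hB => hB.2.2.1 u (h B hB)

lemma treealg_inter {u v : Set T} (hu : u ∈ treealg T) (hv : v ∈ treealg T) :
    u ∩ v ∈ treealg T :=
  fun B hB => hB.2.2.2 u (hu B hB) v (hv B hB)

lemma treealg_union {u v : Set T} (hu : u ∈ treealg T) (hv : v ∈ treealg T) :
    u ∪ v ∈ treealg T := by
  have : u ∪ v = (uᶜ ∩ vᶜ)ᶜ := by simp [Set.compl_inter]
  rw [this]
  exact treealg_compl (treealg_inter (treealg_compl hu) (treealg_compl hv))

lemma treealg_diff {u v : Set T} (hu : u ∈ treealg T) (hv : v ∈ treealg T) :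
    u \ v ∈ treealg T :=
  treealg_inter hu (treealg_compl hv)

lemma biUnion_ici_mem_treealg (s : Finset T) : (⋃ b ∈ s, Set.Ici b) ∈ treealg T := by
  classical
  induction s using Finset.induction_on with
  | empty =>
    rw [show (⋃ b ∈ (∅ : Finset T), Set.Ici b) = ∅ by simp]; exact fun B hB => hB.2.1
  | insert _ _ hx ih =>
      rw [Finset.set_biUnion_insert]
      exact treealg_union (ici_mem_treealg _) ih

lemma trap_mem_treealg (a : T) (s : Finset T) :
    Set.Ici a \ ⋃ b ∈ s, Set.Ici b ∈ treealg T :=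
  treealg_diff (ici_mem_treealg a) (biUnion_ici_mem_treealg s)

/-- Intersection of two cones in a pseudo-tree. -/
lemma ici_inter_ici (hpt : ∀ x : T, IsChain (· ≤ ·) {s : T | s ≤ x}) (a b : T) :
    (∃ c : T, Set.Ici a ∩ Set.Ici b = Set.Ici c) ∨ Set.Ici a ∩ Set.Ici b = ∅ := by
  rcases Set.eq_empty_or_nonempty (Set.Ici a ∩ Set.Ici b) with he | ⟨x, hxa, hxb⟩
  · exact Or.inr he
  · have hcomp : a ≤ b ∨ b ≤ a := by
      rcases eq_or_ne a b with rfl | hne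
      · exact Or.inl le_rfl
      · rcases hpt x hxa hxb hne with h | h
        · exact Or.inl h
        · exact Or.inr h
    rcases hcomp with h | h
    · refine Or.inl ⟨b, ?_⟩
      ext y
      simp only [Set.mem_inter_iff, Set.mem_Ici]
      exact ⟨fun hy => hy.2, fun hy => ⟨h.trans hy, hy⟩⟩
    · refine Or.inl ⟨a, ?_⟩
      ext y
      simp only [Set.mem_inter_iff, Set.mem_Ici]
      exact ⟨fun hy => hy.1, fun hy => ⟨hy, h.trans hy⟩⟩

/-- Trapezoids. -/
def IsTrap (D : Set T) : Prop :=
  ∃ (a : T) (s : Finset T), D = Set.Ici a \ ⋃ b ∈ s, Set.Ici b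

lemma isTrap_empty : IsTrap (∅ : Set T) := by
  refine ⟨⊥, {⊥}, ?_⟩
  simp

lemma isTrap_inter (hpt : ∀ x : T, IsChain (· ≤ ·) {s : T | s ≤ x}) {D E : Set T}
    (hD : IsTrap D) (hE : IsTrap E) : IsTrap (D ∩ E) := by
  classical
  obtain ⟨a, s, rfl⟩ := hD
  obtain ⟨a', s', rfl⟩ := hE
  have key : (Set.Ici a \ ⋃ b ∈ s, Set.Ici b) ∩ (Set.Ici a' \ ⋃ b ∈ s', Set.Ici b)
      = (Set.Ici a ∩ Set.Ici a') \ ⋃ b ∈ s ∪ s', Set.Ici b := by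
    ext x
    simp only [Set.mem_inter_iff, Set.mem_diff, Set.mem_iUnion, Finset.mem_union,
      exists_prop, Set.mem_Ici]
    constructor
    · rintro ⟨⟨h1, h2⟩, h3, h4⟩
      refine ⟨⟨h1, h3⟩, ?_⟩
      rintro ⟨b, hb | hb, hbx⟩
      · exact h2 ⟨b, hb, hbx⟩
      · exact h4 ⟨b, hb, hbx⟩
    · rintro ⟨⟨h1, h3⟩, h2⟩
      exact ⟨⟨h1, fun ⟨b, hb, hbx⟩ => h2 ⟨b, Or.inl hb, hbx⟩⟩,
        h3, fun ⟨b, hb, hbx⟩ => h2 ⟨b, Or.inr hb, hbx⟩⟩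
  rw [key]
  rcases ici_inter_ici hpt a a' with ⟨c, hc⟩ | hc
  · exact ⟨c, s ∪ s', by rw [hc]⟩
  · rw [hc, Set.empty_diff]; exact isTrap_empty

/-- Normal forms: finite unions of trapezoids. -/
def NF (T : Type u) [PartialOrder T] [OrderBot T] : Set (Set T) :=
  {u | ∃ S : Finset (Set T), (∀ D ∈ S, IsTrap D) ∧ u = ⋃₀ ↑S}

lemma empty_mem_NF : (∅ : Set T) ∈ NF T := ⟨∅, by simp, by simp⟩

lemma ici_mem_NF (a : T) : Set.Ici a ∈ NF T :=
  ⟨{Set.Ici a}, by simp; exact ⟨a, ∅, by simp⟩, by simp⟩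

lemma univ_mem_NF : (Set.univ : Set T) ∈ NF T := by
  have : (Set.univ : Set T) = Set.Ici ⊥ := by ext x; simp
  rw [this]; exact ici_mem_NF ⊥

lemma NF_union {u v : Set T} (hu : u ∈ NF T) (hv : v ∈ NF T) : u ∪ v ∈ NF T := by
  classical
  obtain ⟨S, hS, rfl⟩ := hu
  obtain ⟨S', hS', rfl⟩ := hv
  refine ⟨S ∪ S', fun D hD => ?_, by simp [Set.sUnion_union]⟩
  rcases Finset.mem_union.mp hD with h | h
  · exact hS D h
  · exact hS' D h

lemma NF_inter (hpt : ∀ x : T, IsChain (· ≤ ·) {s : T | s ≤ x}) {u v : Set T}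
    (hu : u ∈ NF T) (hv : v ∈ NF T) : u ∩ v ∈ NF T := by
  classical
  obtain ⟨S, hS, rfl⟩ := hu
  obtain ⟨S', hS', rfl⟩ := hv
  refine ⟨Finset.image₂ (· ∩ ·) S S', ?_, ?_⟩
  · intro D hD
    obtain ⟨E, hE, F, hF, rfl⟩ := Finset.mem_image₂.mp hD
    exact isTrap_inter hpt (hS E hE) (hS' F hF)
  · ext x
    simp only [Set.mem_inter_iff, Set.mem_sUnion, Finset.mem_coe, Finset.mem_image₂]
    constructor
    · rintro ⟨⟨D, hD, hxD⟩, ⟨E, hE, hxE⟩⟩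
      exact ⟨D ∩ E, ⟨D, hD, E, hE, rfl⟩, hxD, hxE⟩
    · rintro ⟨F, ⟨D, hD, E, hE, rfl⟩, hx⟩
      exact ⟨⟨D, hD, hx.1⟩, ⟨E, hE, hx.2⟩⟩

lemma trap_compl_mem_NF (a : T) (s : Finset T) :
    (Set.Ici a \ ⋃ b ∈ s, Set.Ici b)ᶜ ∈ NF T := by
  classical
  have key : (Set.Ici a \ ⋃ b ∈ s, Set.Ici b)ᶜ
      = (Set.Ici ⊥ \ ⋃ b ∈ ({a} : Finset T), Set.Ici b) ∪ ⋃ b ∈ s, Set.Ici b := by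
    ext x
    simp only [Set.mem_compl_iff, Set.mem_diff, Set.mem_union, Set.mem_iUnion,
      Finset.mem_singleton, Set.mem_Ici, exists_prop]
    constructor
    · intro h
      by_cases hx : ∃ b ∈ s, b ≤ x
      · exact Or.inr hx
      · refine Or.inl ⟨bot_le, ?_⟩
        rintro ⟨b, rfl, hb⟩
        exact h ⟨hb, fun ⟨c, hc, hcx⟩ => hx ⟨c, hc, hcx⟩⟩
    · rintro (⟨-, h⟩ | ⟨b, hb, hbx⟩) ⟨hax, hno⟩
      · exact h ⟨a, rfl, hax⟩
      · exact hno ⟨b, hb, hbx⟩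
  rw [key]
  refine NF_union ⟨{Set.Ici ⊥ \ ⋃ b ∈ ({a} : Finset T), Set.Ici b}, ?_, by simp⟩ ?_
  · simp only [Finset.mem_singleton, forall_eq]
    exact ⟨⊥, {a}, by simp⟩
  · clear key
    induction s using Finset.induction_on with
    | empty => simpa using empty_mem_NF
    | insert _ _ hx ih =>
        rw [Finset.set_biUnion_insert]
        exact NF_union (ici_mem_NF _) ih

lemma NF_compl (hpt : ∀ x : T, IsChain (· ≤ ·) {s : T | s ≤ x}) {u : Set T}
    (hu : u ∈ NF T) : uᶜ ∈ NF T := by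
  classical
  obtain ⟨S, hS, rfl⟩ := hu
  induction S using Finset.induction_on with
  | empty => simpa using univ_mem_NF
  | @insert D S hD ih =>
      have h1 : (⋃₀ ↑(insert D S) : Set T)ᶜ = Dᶜ ∩ (⋃₀ ↑S)ᶜ := by
        simp [Set.compl_union]
      rw [h1]
      have hDc : Dᶜ ∈ NF T := by
        obtain ⟨a, s, rfl⟩ := hS D (Finset.mem_insert_self D S)
        exact trap_compl_mem_NF a s
      exact NF_inter hpt hDc (ih (fun E hE => hS E (Finset.mem_insert_of_mem hE)))

lemma treealg_subset_NF (hpt : ∀ x : T, IsChain (· ≤ ·) {s : T | s ≤ x}) :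
    treealg T ⊆ NF T := by
  intro u hu
  exact hu (NF T) ⟨fun v ⟨a, ha⟩ => ha ▸ ici_mem_NF a, empty_mem_NF,
    fun v hv => NF_compl hpt hv, fun v hv w hw => NF_inter hpt hv hw⟩


section UF
variable (U : SetUltrafilter (treealg T))

/-- The initial chain of the ultrafilter. -/
def Cuf : Set T := {x : T | Set.Ici x ∈ U.carrier}

lemma univ_mem_uf : (Set.univ : Set T) ∈ U.carrier := by
  rcases U.mem_or_compl_mem Set.univ (by
    have : (Set.univ : Set T) = Set.Ici (⊥ : T) := by ext x; simp
    rw [this]; exact ici_mem_treealg ⊥) with h | h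
  · exact h
  · exact absurd (by simpa using h) U.empty_not_mem

lemma bot_mem_Cuf : (⊥ : T) ∈ Cuf U := by
  have : Set.Ici (⊥ : T) = Set.univ := by ext x; simp
  simp only [Cuf, Set.mem_setOf_eq, this]
  exact univ_mem_uf U

lemma mem_uf_nonempty {u : Set T} (hu : u ∈ U.carrier) : u.Nonempty := by
  rcases Set.eq_empty_or_nonempty u with rfl | h
  · exact absurd hu U.empty_not_mem
  · exact h

lemma Cuf_chain (hpt : ∀ x : T, IsChain (· ≤ ·) {s : T | s ≤ x}) :
    IsChain (· ≤ ·) (Cuf U) := by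
  intro x hx y hy hne
  have h := U.inter_mem _ hx _ hy
  obtain ⟨z, hzx, hzy⟩ := mem_uf_nonempty U h
  exact hpt z hzx hzy hne

lemma finset_ub_Cuf (hpt : ∀ x : T, IsChain (· ≤ ·) {s : T | s ≤ x})
    (s : Finset T) (hs : ↑s ⊆ Cuf U) : ∃ x ∈ Cuf U, ∀ y ∈ s, y ≤ x := by
  classical
  induction s using Finset.induction_on with
  | empty => exact ⟨⊥, bot_mem_Cuf U, by simp⟩
  | @insert a s ha ih =>
      obtain ⟨x, hx, hub⟩ := ih (fun y hy => hs (Finset.mem_insert_of_mem hy))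
      have haC : a ∈ Cuf U := hs (Finset.mem_insert_self a s)
      have : a ≤ x ∨ x ≤ a := by
        rcases eq_or_ne a x with rfl | hne
        · exact Or.inl le_rfl
        · rcases Cuf_chain U hpt haC hx hne with h | h
          · exact Or.inl h
          · exact Or.inr h
      rcases this with h | h
      · exact ⟨x, hx, fun y hy => by
          rcases Finset.mem_insert.mp hy with rfl | hy
          · exact h
          · exact hub y hy⟩
      · exact ⟨a, haC, fun y hy => by
          rcases Finset.mem_insert.mp hy with rfl | hy
          · exact le_rfl
          · exact (hub y hy).trans h⟩

lemma diff_biUnion_insert (a b : T) (s : Finset T) [DecidableEq T] :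
    Set.Ici a \ ⋃ c ∈ insert b s, Set.Ici c
      = (Set.Ici a \ ⋃ c ∈ s, Set.Ici c) ∩ (Set.Ici b)ᶜ := by
  rw [Finset.set_biUnion_insert]
  ext x
  simp only [Set.mem_diff, Set.mem_union, Set.mem_inter_iff, Set.mem_compl_iff]
  tauto

lemma trap_mem_uf {a : T} (ha : a ∈ Cuf U) (s : Finset T)
    (hs : ∀ b ∈ s, Set.Ici b ∉ U.carrier) :
    Set.Ici a \ ⋃ b ∈ s, Set.Ici b ∈ U.carrier := by
  classical
  induction s using Finset.induction_on with
  | empty =>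
    rw [show (Set.Ici a \ ⋃ b ∈ (∅ : Finset T), Set.Ici b) = Set.Ici a by simp]; exact ha
  | @insert b s hb ih =>
      rw [diff_biUnion_insert]
      refine U.inter_mem _ (ih (fun c hc => hs c (Finset.mem_insert_of_mem hc))) _ ?_
      rcases U.mem_or_compl_mem _ (ici_mem_treealg b) with h | h
      · exact absurd h (hs b (Finset.mem_insert_self b s))
      · exact h

/-- Structure theorem: every element of the ultrafilter contains a trapezoid based
on the chain, subtracting cones not in the ultrafilter. -/
lemma exists_trap_subset (hpt : ∀ x : T, IsChain (· ≤ ·) {s : T | s ≤ x})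
    {u : Set T} (hu : u ∈ U.carrier) :
    ∃ a ∈ Cuf U, ∃ s : Finset T, (∀ b ∈ s, Set.Ici b ∉ U.carrier) ∧
      Set.Ici a \ ⋃ b ∈ s, Set.Ici b ⊆ u := by
  classical
  obtain ⟨S, hS, rfl⟩ := treealg_subset_NF hpt (U.subset_alg hu)
  -- some member of S is in U
  have hexists : ∃ D ∈ S, D ∈ U.carrier := by
    by_contra hno
    push_neg at hno
    have hcompl : ∀ E : Finset (Set T), (∀ D ∈ E, IsTrap D) → (∀ D ∈ E, D ∉ U.carrier) →
        (⋃₀ ↑E : Set T)ᶜ ∈ U.carrier := by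
      intro E
      induction E using Finset.induction_on with
      | empty => intro _ _; simpa using univ_mem_uf U
      | @insert D E hD ih =>
          intro htrap hnot
          have h1 : (⋃₀ ↑(insert D E) : Set T)ᶜ = Dᶜ ∩ (⋃₀ ↑E)ᶜ := by
            simp [Set.compl_union]
          rw [h1]
          have hDalg : D ∈ treealg T := by
            obtain ⟨a, s, rfl⟩ := htrap D (Finset.mem_insert_self D E)
            exact trap_mem_treealg a s
          have hDc : Dᶜ ∈ U.carrier := by
            rcases U.mem_or_compl_mem D hDalg with h | h
            · exact absurd h (hnot D (Finset.mem_insert_self D E))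
            · exact h
          exact U.inter_mem _ hDc _
            (ih (fun F hF => htrap F (Finset.mem_insert_of_mem hF))
                (fun F hF => hnot F (Finset.mem_insert_of_mem hF)))
    have := U.inter_mem _ hu _ (hcompl S hS hno)
    simp only [Set.inter_compl_self] at this
    exact absurd this U.empty_not_mem
  obtain ⟨D, hDS, hDU⟩ := hexists
  obtain ⟨a, s, rfl⟩ := hS D hDS
  refine ⟨a, ?_, s, ?_, ?_⟩
  · have : Set.Ici a \ ⋃ b ∈ s, Set.Ici b ⊆ Set.Ici a := Set.diff_subset
    exact U.up_closed _ hDU _ (ici_mem_treealg a) this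
  · intro b hb hbU
    have hdisj : (Set.Ici a \ ⋃ c ∈ s, Set.Ici c) ∩ Set.Ici b = ∅ := by
      ext x
      simp only [Set.mem_inter_iff, Set.mem_diff, Set.mem_iUnion, Set.mem_empty_iff_false,
        iff_false, not_and, exists_prop]
      rintro ⟨h1, h2⟩ h3
      exact h2 ⟨b, hb, h3⟩
    have := U.inter_mem _ hDU _ hbU
    rw [hdisj] at this
    exact absurd this U.empty_not_mem
  · intro x hx
    exact ⟨_, hDS, hx⟩
end UF


section Enum
variable {C : Set T} (hC : IsChain (· ≤ ·) C) (hbot : (⊥ : T) ∈ C)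

lemma setCof_set_nonempty : {c : Cardinal | ∃ D : Set T, D ⊆ C ∧ c = #↥D ∧
    ∀ x ∈ C, ∃ y ∈ D, x ≤ y}.Nonempty :=
  ⟨#↥C, C, le_refl _, rfl, fun x hx => ⟨x, hx, le_rfl⟩⟩

lemma setCof_le_of_cofinal {D : Set T} (hD : D ⊆ C) (hcof : ∀ x ∈ C, ∃ y ∈ D, x ≤ y) :
    setCof C ≤ #↥D :=
  csInf_le' ⟨D, hD, rfl, hcof⟩

include hC in
/-- any subset of the chain of size < setCof C is bounded in C -/
lemma bounded_of_lt_setCof {S : Set T} (hS : S ⊆ C) (hcard : #↥S < setCof C) :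
    ∃ x ∈ C, ∀ y ∈ S, y ≤ x := by
  by_contra hno
  push_neg at hno
  have hcof : ∀ x ∈ C, ∃ y ∈ S, x ≤ y := by
    intro x hx
    obtain ⟨y, hyS, hyx⟩ := hno x hx
    refine ⟨y, hyS, ?_⟩
    rcases eq_or_ne x y with rfl | hne
    · exact le_rfl
    · rcases hC hx (hS hyS) hne with h | h
      · exact h
      · exact absurd h hyx
  exact absurd (setCof_le_of_cofinal hS hcof) (not_le_of_gt hcard)

include hbot in
lemma one_le_setCof : 1 ≤ setCof C := by
  rw [Cardinal.one_le_iff_ne_zero]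
  intro h0
  obtain ⟨D, hD, hcard, hcof⟩ := csInf_mem (setCof_set_nonempty (C := C))
  replace hcard : setCof C = #↥D := hcard
  rw [h0] at hcard
  have : D = ∅ := by
    rw [← Set.not_nonempty_iff_eq_empty]
    intro ⟨x, hx⟩
    have := Cardinal.mk_eq_zero_iff.mp hcard.symm
    exact this.false ⟨x, hx⟩
  obtain ⟨y, hy, -⟩ := hcof ⊥ hbot
  rw [this] at hy
  exact hy

include hC hbot in
lemma setCof_eq_one_of_max {m : T} (hm : m ∈ C) (hmax : ∀ x ∈ C, x ≤ m) :
    setCof C = 1 := by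
  refine le_antisymm ?_ (one_le_setCof hbot)
  have := setCof_le_of_cofinal (C := C) (D := {m}) (by simpa using hm)
    (fun x hx => ⟨m, rfl, hmax x hx⟩)
  simpa using this

include hC hbot in
lemma setCof_eq_one_or_infinite : setCof C = 1 ∨ ℵ₀ ≤ setCof C := by
  by_cases h : ℵ₀ ≤ setCof C
  · exact Or.inr h
  push_neg at h
  obtain ⟨D, hD, hcard, hcof⟩ := csInf_mem (setCof_set_nonempty (C := C))
  have hDfin : D.Finite := by
    rw [← Cardinal.lt_aleph0_iff_set_finite]
    rw [← hcard]; exact h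
  have hDne : D.Nonempty := by
    rcases Set.eq_empty_or_nonempty D with rfl | h
    · obtain ⟨y, hy, -⟩ := hcof ⊥ hbot; exact absurd hy (Set.notMem_empty y)
    · exact h
  obtain ⟨m, hmD, hmax'⟩ := Set.Finite.exists_maximalFor id D hDfin hDne
  have hmax : ∀ y ∈ D, y ≤ m := by
    intro y hy
    rcases eq_or_ne y m with rfl | hne
    · exact le_rfl
    · rcases hC (hD hy) (hD hmD) hne with hle | hle
      · exact hle
      · exact hmax' hy hle
  left
  exact setCof_eq_one_of_max hC hbot (hD hmD) (fun x hx => by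
    obtain ⟨y, hyD, hxy⟩ := hcof x hx
    exact hxy.trans (hmax y hyD))

include hC hbot in
lemma exists_strictMono_cofinal :
    ∃ c : (setCof C).ord.ToType → T, (∀ ι, c ι ∈ C) ∧ StrictMono c ∧
      ∀ x ∈ C, ∃ ι, x ≤ c ι := by
  classical
  obtain ⟨D, hD, hcard, hcof⟩ := csInf_mem (setCof_set_nonempty (C := C))
  replace hcard : setCof C = #↥D := hcard
  have hmkD : #↥D = setCof C := hcard.symm
  have hequiv : Nonempty ((setCof C).ord.ToType ≃ ↥D) := by
    rw [← Cardinal.eq, Cardinal.mk_ord_toType, hmkD]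
  obtain ⟨e⟩ := hequiv
  rcases setCof_eq_one_or_infinite hC hbot with h1 | hinf
  · -- C has essentially a max
    have hsub : Subsingleton (setCof C).ord.ToType := by
      rw [← Cardinal.le_one_iff_subsingleton, Cardinal.mk_ord_toType, h1]
    refine ⟨fun ι => (e ι : T), fun ι => hD (e ι).2, ?_, ?_⟩
    · intro a b hab
      exact (ne_of_lt hab (Subsingleton.elim a b)).elim
    · intro x hx
      obtain ⟨y, hyD, hxy⟩ := hcof x hx
      exact ⟨e.symm ⟨y, hyD⟩, by simpa using hxy⟩
  · -- infinite case: recursion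
    have hnomax : ∀ x ∈ C, ∃ y ∈ C, x < y := by
      intro x hx
      by_contra hno
      push_neg at hno
      have hmax : ∀ y ∈ C, y ≤ x := by
        intro y hy
        rcases eq_or_ne y x with rfl | hne
        · exact le_rfl
        · rcases hC hy hx hne with h | h
          · exact h
          · exact absurd (lt_of_le_of_ne h hne.symm) (hno y hy)
      have := setCof_eq_one_of_max hC hbot hx hmax
      rw [this] at hinf
      exact absurd hinf (not_le.mpr Cardinal.one_lt_aleph0)
    -- recursion
    let next : ∀ ι : (setCof C).ord.ToType, (∀ κ, κ < ι → T) → T := fun ι IH =>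
      if h : ∃ y, y ∈ C ∧ (∀ κ (hκ : κ < ι), IH κ hκ < y) ∧ (e ι : T) ≤ y then h.choose
      else ⊥
    let c : (setCof C).ord.ToType → T := IsWellFounded.fix (· < ·) next
    have hcdef : ∀ ι, c ι = next ι (fun κ _ => c κ) :=
      fun ι => IsWellFounded.fix_eq (· < ·) next ι
    have hspec : ∀ ι : (setCof C).ord.ToType, c ι ∈ C ∧ (∀ κ, κ < ι → c κ < c ι) ∧ (e ι : T) ≤ c ι := by
      intro ι0
      apply IsWellFounded.induction (α := (setCof C).ord.ToType) (· < ·) ι0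
      intro ι IH
      have hS : (c '' Set.Iio ι) ⊆ C := by
        rintro _ ⟨κ, hκ, rfl⟩
        exact (IH κ hκ).1
      have hcardS : #↥(c '' Set.Iio ι) < setCof C := by
        calc #↥(c '' Set.Iio ι) ≤ #↥(Set.Iio ι) := Cardinal.mk_image_le
        _ < setCof C := Cardinal.mk_Iio_ord_toType ι
      obtain ⟨x, hxC, hxub⟩ := bounded_of_lt_setCof hC hS hcardS
      have heC : (e ι : T) ∈ C := hD (e ι).2
      have hz : ∃ z ∈ C, x ≤ z ∧ (e ι : T) ≤ z := by
        rcases eq_or_ne x (e ι : T) with heq | hne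
        · exact ⟨x, hxC, le_rfl, heq.ge⟩
        · rcases hC hxC heC hne with h | h
          · exact ⟨(e ι : T), heC, h, le_rfl⟩
          · exact ⟨x, hxC, le_rfl, h⟩
      obtain ⟨z, hzC, hxz, hez⟩ := hz
      obtain ⟨y, hyC, hzy⟩ := hnomax z hzC
      have hex : ∃ y', y' ∈ C ∧ (∀ κ (hκ : κ < ι), c κ < y') ∧ (e ι : T) ≤ y' := by
        refine ⟨y, hyC, ?_, hez.trans hzy.le⟩
        intro κ hκ
        exact lt_of_le_of_lt ((hxub _ ⟨κ, hκ, rfl⟩).trans hxz) hzy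
      have : c ι = hex.choose := by
        rw [hcdef ι]
        simp only [next, dif_pos hex]
      rw [this]
      obtain ⟨h1, h2, h3⟩ := hex.choose_spec
      exact ⟨h1, fun κ hκ => h2 κ hκ, h3⟩
    refine ⟨c, fun ι => (hspec ι).1, ?_, ?_⟩
    · intro a b hab
      exact (hspec b).2.1 a hab
    · intro x hx
      obtain ⟨y, hyD, hxy⟩ := hcof x hx
      exact ⟨e.symm ⟨y, hyD⟩, hxy.trans (by simpa using (hspec (e.symm ⟨y, hyD⟩)).2.2)⟩

include hC hbot in
lemma setCof_regular_of_infinite (hinf : ℵ₀ ≤ setCof C) : (setCof C).IsRegular := by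
  obtain ⟨c, hcC, hcmono, hccof⟩ := exists_strictMono_cofinal hC hbot
  constructor
  · exact hinf
  · -- setCof C ≤ cof of its ord
    obtain ⟨S, hSunb, hScard⟩ := Order.exists_cof_eq (setCof C).ord.ToType
    rw [Ordinal.cof_toType] at hScard
    have himg : ∀ x ∈ C, ∃ y ∈ c '' S, x ≤ y := by
      intro x hx
      obtain ⟨ι, hι⟩ := hccof x hx
      obtain ⟨s, hsS, hs⟩ := hSunb ι
      have : ι ≤ s := hs
      exact ⟨c s, ⟨s, hsS, rfl⟩, hι.trans (hcmono.monotone this)⟩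
    calc setCof C ≤ #↥(c '' S) := setCof_le_of_cofinal (fun _ ⟨s, _, h⟩ => h ▸ hcC s) himg
    _ ≤ #↥S := Cardinal.mk_image_le
    _ = (setCof C).ord.cof := hScard
end Enum


end Aux

-- coding lemmas
lemma one_add_lt_one_add {a b : Cardinal} (h : a < b) : 1 + a < 1 + b := by
  rcases lt_or_ge b ℵ₀ with hb | hb
  · obtain ⟨n, rfl⟩ := Cardinal.lt_aleph0.mp hb
    obtain ⟨m, rfl⟩ := Cardinal.lt_aleph0.mp (h.trans hb)
    have hmn : m < n := by exact_mod_cast h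
    have : ((1 + m : ℕ) : Cardinal) < ((1 + n : ℕ) : Cardinal) := by
      exact_mod_cast Nat.add_lt_add_left hmn 1
    simpa using this
  · have hb1 : (1 : Cardinal) ≤ b := le_trans (le_of_lt Cardinal.one_lt_aleph0) hb
    rw [Cardinal.add_eq_right hb hb1]
    rcases lt_or_ge a ℵ₀ with ha | ha
    · exact lt_of_lt_of_le (Cardinal.add_lt_aleph0 Cardinal.one_lt_aleph0 ha) hb
    · rw [Cardinal.add_eq_right ha (le_trans (le_of_lt Cardinal.one_lt_aleph0) ha)]
      exact h

lemma sub_one_lt_ord {θ : Cardinal} {x : Ordinal} (hx : x < (1 + θ).ord) (hx0 : x ≠ 0) :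
    x - 1 < θ.ord := by
  have h1x : (1 : Ordinal) ≤ x := Ordinal.one_le_iff_ne_zero.mpr hx0
  have hxeq : 1 + (x - 1) = x := Ordinal.add_sub_cancel_of_le h1x
  rw [Cardinal.lt_ord]
  by_contra hge
  push_neg at hge
  have : 1 + θ ≤ 1 + (x - 1).card := add_le_add_right hge 1
  have hcard : (1 + (x - 1) : Ordinal).card = 1 + (x - 1).card := by
    rw [Ordinal.card_add]; simp
  rw [hxeq] at hcard
  rw [← hcard] at this
  exact absurd (Cardinal.lt_ord.mp hx) (not_lt.mpr this)

lemma code_lt_ord {θ : Cardinal} {o : Ordinal} (ho : o < θ.ord) :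
    1 + o < (1 + θ).ord := by
  rw [Cardinal.lt_ord]
  have : (1 + o : Ordinal).card = 1 + o.card := by rw [Ordinal.card_add]; simp
  rw [this]
  exact one_add_lt_one_add (Cardinal.lt_ord.mp ho)

/-- decode a nonzero ordinal `x < (1+θ).ord` into an element of `θ.ord.ToType`. -/
noncomputable def decodeβ (θ : Cardinal) (x : Ordinal) (hx : x < (1 + θ).ord)
    (hx0 : x ≠ 0) : θ.ord.ToType :=
  Ordinal.ToType.mk (o := θ.ord) ⟨x - 1, sub_one_lt_ord hx hx0⟩

lemma decodeβ_le_decodeβ {θ : Cardinal} {x y : Ordinal} (hx : x < (1 + θ).ord)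
    (hx0 : x ≠ 0) (hy : y < (1 + θ).ord) (hy0 : y ≠ 0) :
    decodeβ θ x hx hx0 ≤ decodeβ θ y hy hy0 ↔ x ≤ y := by
  unfold decodeβ
  rw [OrderIso.le_iff_le]; show x - 1 ≤ y - 1 ↔ x ≤ y
  constructor
  · intro h
    calc x = 1 + (x - 1) := (Ordinal.add_sub_cancel_of_le
          (Ordinal.one_le_iff_ne_zero.mpr hx0)).symm
    _ ≤ 1 + (y - 1) := add_le_add_right h 1
    _ = y := Ordinal.add_sub_cancel_of_le (Ordinal.one_le_iff_ne_zero.mpr hy0)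
  · intro h
    rw [Ordinal.sub_le]
    calc x ≤ y := h
    _ = 1 + (y - 1) := (Ordinal.add_sub_cancel_of_le
          (Ordinal.one_le_iff_ne_zero.mpr hy0)).symm

lemma le_decodeβ {θ : Cardinal} {x : Ordinal} (hx : x < (1 + θ).ord) (hx0 : x ≠ 0)
    (β : θ.ord.ToType)
    (h : 1 + ((Ordinal.ToType.mk (o := θ.ord)).symm β : Ordinal) ≤ x) :
    β ≤ decodeβ θ x hx hx0 := by
  unfold decodeβ
  conv_lhs => rw [← OrderIso.apply_symm_apply (Ordinal.ToType.mk (o := θ.ord)) β]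
  rw [OrderIso.le_iff_le]
  rw [← Subtype.coe_le_coe]
  show ((Ordinal.ToType.mk (o := θ.ord)).symm β : Ordinal) ≤ x - 1
  have hxeq : 1 + (x - 1) = x :=
    Ordinal.add_sub_cancel_of_le (Ordinal.one_le_iff_ne_zero.mpr hx0)
  rw [← hxeq] at h
  exact (add_le_add_iff_left (1 : Ordinal)).mp h



/-- Let `T` be a pseudo-tree with a least element, `U` an ultrafilter on
`Treealg T` with corresponding initial chain `C = {x : T↑x ∈ U}`, and `Λ = (t α β)` a
`λ`-fan above `C`.  Then `(U,⊇) ≡_T (cf C × ∏^w_{α<λ}(1+θ_α), ≤)`.  In particular,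
`(U,⊇)` is Tukey equivalent to a product `(μ × ∏^w κ_α, ≤)` with `μ` equal to `1` or an
infinite regular cardinal and each `κ_α` equal to `2` or an infinite regular cardinal. -/
theorem stmt18 {T : Type u} [PartialOrder T] [OrderBot T]
    (hpt : ∀ x : T, IsChain (· ≤ ·) {s : T | s ≤ x})
    (U : SetUltrafilter (treealg T))
    (lam : Cardinal.{u}) (θ : lam.ord.ToType → Cardinal.{u})
    (t : (α : lam.ord.ToType) → (θ α).ord.ToType → T)
    (hfan : IsLambdaFan {x : T | Set.Ici x ∈ U.carrier} lam θ t) :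
    TukeyEquiv ((↥U.carrier)ᵒᵈ)
      ((setCof {x : T | Set.Ici x ∈ U.carrier}).ord.ToType ×
        WeakProd (fun α => 1 + θ α)) ∧
      ∃ (μ : Cardinal.{u}) (I : Type u) (κ : I → Cardinal.{u}),
        (μ = 1 ∨ (ℵ₀ ≤ μ ∧ μ.IsRegular)) ∧
        (∀ i, κ i = 2 ∨ (ℵ₀ ≤ κ i ∧ (κ i).IsRegular)) ∧
        TukeyEquiv ((↥U.carrier)ᵒᵈ) (μ.ord.ToType × WeakProd κ) := by
  classical
  have hCchain : IsChain (· ≤ ·) (Cuf U) := Cuf_chain U hpt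
  have hbot : (⊥ : T) ∈ Cuf U := bot_mem_Cuf U
  obtain ⟨c, hcC, hcmono, hccof⟩ := exists_strictMono_cofinal hCchain hbot
  have hconeNot : ∀ α β, Set.Ici (t α β) ∉ U.carrier := by
    intro α β hmem
    exact lt_irrefl _ (hfan.above α β _ hmem)
  have htC : ∀ α β, ∀ x ∈ Cuf U, x < t α β := fun α β x hx => hfan.above α β x hx
  let dec : ∀ (w : WeakProd fun α => 1 + θ α) (α : lam.ord.ToType), w.1 α ≠ 0 →
      (θ α).ord.ToType :=
    fun w α h => decodeβ (θ α) (w.1 α) (w.2.1 α) h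
  let tw : (WeakProd fun α => 1 + θ α) → lam.ord.ToType → T := fun w α =>
    if h : w.1 α ≠ 0 then t α (dec w α h) else ⊥
  let coneF : (WeakProd fun α => 1 + θ α) → Finset T := fun w => w.2.2.toFinset.image (tw w)
  let K := (setCof (Cuf U)).ord.ToType × WeakProd (fun α => 1 + θ α)
  let g : K → Set T := fun k => Set.Ici (c k.1) \ ⋃ b ∈ coneF k.2, Set.Ici b
  have hmemcones : ∀ (w : WeakProd fun α => 1 + θ α) (x : T),
      (x ∈ ⋃ b ∈ coneF w, Set.Ici b) ↔ ∃ α, ∃ h : w.1 α ≠ 0, t α (dec w α h) ≤ x := by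
    intro w x
    simp only [Set.mem_iUnion, Set.mem_Ici, exists_prop]
    constructor
    · rintro ⟨b, hb, hbx⟩
      obtain ⟨α, hα, rfl⟩ := Finset.mem_image.mp hb
      have hα' : w.1 α ≠ 0 := by simpa using (Set.Finite.mem_toFinset _).mp hα
      refine ⟨α, hα', ?_⟩
      have : tw w α = t α (dec w α hα') := dif_pos hα'
      rw [this] at hbx
      exact hbx
    · rintro ⟨α, h, hle⟩
      refine ⟨tw w α, Finset.mem_image_of_mem _ ((Set.Finite.mem_toFinset _).mpr h), ?_⟩
      have : tw w α = t α (dec w α h) := dif_pos h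
      rw [this]
      exact hle
  have hgU : ∀ k : K, g k ∈ U.carrier := by
    intro k
    refine trap_mem_uf U (hcC k.1) (coneF k.2) ?_
    intro b hb
    obtain ⟨α, hα, rfl⟩ := Finset.mem_image.mp hb
    have hα' : (k.2).1 α ≠ 0 := by simpa using (Set.Finite.mem_toFinset _).mp hα
    rw [show tw k.2 α = t α (dec k.2 α hα') from dif_pos hα']
    exact hconeNot _ _
  have hganti : ∀ k k' : K, k ≤ k' → g k' ⊆ g k := by
    rintro ⟨d, w⟩ ⟨d', w'⟩ ⟨hd, hw⟩ x ⟨hx1, hx2⟩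
    have hwv : ∀ α, w.1 α ≤ w'.1 α := fun α => hw α
    constructor
    · exact le_trans (hcmono.monotone hd) hx1
    · intro hmem
      obtain ⟨α, h, hle⟩ := (hmemcones w x).mp hmem
      have hw'α : w'.1 α ≠ 0 := by
        intro h0
        have hww := hwv α
        rw [h0] at hww
        exact h (le_antisymm hww zero_le)
      apply hx2
      rw [hmemcones w' x]
      refine ⟨α, hw'α, le_trans ?_ hle⟩
      rw [(hfan.strictAnti α).le_iff_ge]
      exact (decodeβ_le_decodeβ _ _ _ _).mpr (hwv α)
  have hdichot : ∀ b : T, Set.Ici b ∉ U.carrier →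
      (∃ cb ∈ Cuf U, Set.Ici cb ∩ Set.Ici b = ∅) ∨ ∃ α β, t α β ≤ b := by
    intro b hb
    by_cases hab : ∀ x ∈ Cuf U, x < b
    · obtain ⟨α, β, hle⟩ := hfan.approx b hab
      exact Or.inr ⟨α, β, hle⟩
    · push_neg at hab
      obtain ⟨x, hxC, hxb⟩ := hab
      left
      refine ⟨x, hxC, ?_⟩
      ext y
      simp only [Set.mem_inter_iff, Set.mem_Ici, Set.mem_empty_iff_false, iff_false, not_and]
      intro hxy hby
      exfalso
      have hcomp : x ≤ b ∨ b ≤ x := by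
        rcases eq_or_ne x b with rfl | hne
        · exact Or.inl le_rfl
        · rcases hpt y hxy hby hne with h | h
          · exact Or.inl h
          · exact Or.inr h
      rcases hcomp with h | h
      · rcases eq_or_lt_of_le h with rfl | hlt
        · exact hb hxC
        · exact hxb hlt
      · exact hb (U.up_closed _ hxC _ (ici_mem_treealg b) (Set.Ici_subset_Ici.mpr h))
  have hgcof : ∀ u ∈ U.carrier, ∃ k : K, g k ⊆ u := by
    intro u hu
    obtain ⟨a, haC, s, hsnot, hsub⟩ := exists_trap_subset U hpt hu
    set PA : T → Prop := fun b => ∃ cb ∈ Cuf U, Set.Ici cb ∩ Set.Ici b = ∅ with hPAdef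
    let bnd : T → T := fun b => if h : PA b then h.choose else ⊥
    have hbndC : ∀ b, bnd b ∈ Cuf U := by
      intro b
      by_cases h : PA b
      · rw [show bnd b = h.choose from dif_pos h]
        exact h.choose_spec.1
      · rw [show bnd b = ⊥ from dif_neg h]
        exact bot_mem_Cuf U
    have hbnddisj : ∀ b, ∀ h : PA b, Set.Ici (bnd b) ∩ Set.Ici b = ∅ := by
      intro b h
      rw [show bnd b = h.choose from dif_pos h]
      exact h.choose_spec.2
    let bnds : Finset T := insert a (s.image bnd)
    have hbndsC : ↑bnds ⊆ Cuf U := by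
      intro y hy
      simp only [bnds, Finset.coe_insert, Set.mem_insert_iff, Finset.coe_image,
        Set.mem_image, Finset.mem_coe] at hy
      rcases hy with rfl | ⟨b, _, rfl⟩
      · exact haC
      · exact hbndC b
    obtain ⟨x0, hx0C, hx0ub⟩ := finset_ub_Cuf U hpt bnds hbndsC
    obtain ⟨d, hd⟩ := hccof x0 hx0C
    let codeOf : T → lam.ord.ToType → Ordinal := fun b α =>
      if h : ∃ β, t α β ≤ b then
        1 + ((Ordinal.ToType.mk (o := (θ α).ord)).symm h.choose : Ordinal) else 0
    let sB : Finset T := s.filter (fun b => ¬ PA b)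
    let w1 : lam.ord.ToType → Ordinal := fun α => sB.sup (fun b => codeOf b α)
    have hord_pos : ∀ α, (0 : Ordinal) < (1 + θ α).ord := by
      intro α
      rw [Cardinal.lt_ord]
      simpa using lt_of_lt_of_le zero_lt_one (le_self_add (a := (1 : Cardinal)) (b := θ α))
    have hcode_lt : ∀ b α, codeOf b α < (1 + θ α).ord := by
      intro b α
      by_cases h : ∃ β, t α β ≤ b
      · rw [show codeOf b α = 1 + ((Ordinal.ToType.mk (o := (θ α).ord)).symm h.choose : Ordinal)
          from dif_pos h]
        exact code_lt_ord ((Ordinal.ToType.mk (o := (θ α).ord)).symm h.choose).2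
      · rw [show codeOf b α = 0 from dif_neg h]
        exact hord_pos α
    have hw1_lt : ∀ α, w1 α < (1 + θ α).ord := by
      intro α
      exact (Finset.sup_lt_iff (hord_pos α)).mpr (fun b _ => hcode_lt b α)
    have hw1fin : {α | w1 α ≠ 0}.Finite := by
      have hsubf : {α | w1 α ≠ 0} ⊆ ⋃ b ∈ (sB : Set T), {α | ∃ β, t α β ≤ b} := by
        intro α hα
        have hexb : ∃ b ∈ sB, codeOf b α ≠ 0 := by
          by_contra hno
          push_neg at hno
          exact hα ((Finset.sup_eq_bot_iff _ _).mpr hno)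
        obtain ⟨b, hb, hcb⟩ := hexb
        have hex : ∃ β, t α β ≤ b := by
          by_contra hne
          exact hcb (dif_neg hne)
        exact Set.mem_biUnion hb hex
      refine Set.Finite.subset (Set.Finite.biUnion sB.finite_toSet ?_) hsubf
      intro b _
      apply Set.Subsingleton.finite
      intro α hα α' hα'
      by_contra hne
      obtain ⟨β, hβ⟩ := hα
      obtain ⟨β', hβ'⟩ := hα'
      rcases eq_or_ne (t α β) (t α' β') with heq | hne2
      · exact (hfan.incomp α α' hne β β').1 heq.le
      · rcases hpt b hβ hβ' hne2 with h | h
        · exact (hfan.incomp α α' hne β β').1 h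
        · exact (hfan.incomp α α' hne β β').2 h
    refine ⟨(d, ⟨w1, hw1_lt, hw1fin⟩), ?_⟩
    rintro x ⟨hx1, hx2⟩
    apply hsub
    constructor
    · have ha0 : a ≤ x0 := hx0ub a (Finset.mem_insert_self a _)
      exact le_trans (ha0.trans hd) hx1
    · intro hmem
      rw [Set.mem_iUnion] at hmem
      obtain ⟨b, hmem⟩ := hmem
      rw [Set.mem_iUnion] at hmem
      obtain ⟨hbs, hbx⟩ := hmem
      rw [Set.mem_Ici] at hbx
      by_cases hPA : PA b
      · have h1 : bnd b ≤ x := by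
          refine le_trans (le_trans ?_ hd) hx1
          exact hx0ub (bnd b) (Finset.mem_insert_of_mem (Finset.mem_image_of_mem bnd hbs))
        have hxmem : x ∈ Set.Ici (bnd b) ∩ Set.Ici b := ⟨h1, hbx⟩
        rw [hbnddisj b hPA] at hxmem
        exact hxmem
      · have hbU : Set.Ici b ∉ U.carrier := hsnot b hbs
        have hB : ∃ α β, t α β ≤ b := (hdichot b hbU).resolve_left hPA
        obtain ⟨α, β, hβ⟩ := hB
        have hEx : ∃ β, t α β ≤ b := ⟨β, hβ⟩
        have hne0 : codeOf b α ≠ 0 := by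
          rw [show codeOf b α = 1 + ((Ordinal.ToType.mk (o := (θ α).ord)).symm hEx.choose :
            Ordinal) from dif_pos hEx]
          intro h0
          have h1 : (1 : Ordinal) ≤ 1 + ((Ordinal.ToType.mk (o := (θ α).ord)).symm hEx.choose :
            Ordinal) := le_self_add
          rw [h0] at h1
          simp at h1
        have hbsB : b ∈ sB := Finset.mem_filter.mpr ⟨hbs, hPA⟩
        have hw1α : w1 α ≠ 0 := by
          intro h0
          refine hne0 (le_antisymm ?_ zero_le)
          rw [← h0]
          exact Finset.le_sup (f := fun b => codeOf b α) hbsB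
        apply hx2
        rw [hmemcones ⟨w1, hw1_lt, hw1fin⟩ x]
        refine ⟨α, hw1α, ?_⟩
        have hch : t α hEx.choose ≤ b := hEx.choose_spec
        have hle2 : hEx.choose ≤ dec ⟨w1, hw1_lt, hw1fin⟩ α hw1α := by
          apply le_decodeβ
          have hsup : codeOf b α ≤ w1 α := Finset.le_sup (f := fun b => codeOf b α) hbsB
          rw [show codeOf b α = 1 + ((Ordinal.ToType.mk (o := (θ α).ord)).symm hEx.choose :
            Ordinal) from dif_pos hEx] at hsup
          exact hsup
        exact le_trans ((hfan.strictAnti α).antitone hle2) (hch.trans hbx)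
  -- the two Tukey maps
  let U' := (↥U.carrier)ᵒᵈ
  let f : K → U' := fun k => OrderDual.toDual ⟨g k, hgU k⟩
  have hfmono : Monotone f := by
    intro k k' hkk'
    exact OrderDual.toDual_le_toDual.mpr (hganti k k' hkk')
  have hfcof : ∀ p : U', ∃ k, p ≤ f k := by
    intro p
    obtain ⟨k, hk⟩ := hgcof (OrderDual.ofDual p).1 (OrderDual.ofDual p).2
    refine ⟨k, ?_⟩
    rw [show p = OrderDual.toDual (OrderDual.ofDual p) from rfl]
    exact OrderDual.toDual_le_toDual.mpr hk
  have tukey1 : TukeyLE U' K := by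
    refine ⟨f, ?_⟩
    intro X hX p
    obtain ⟨k, hk⟩ := hfcof p
    obtain ⟨x, hxX, hkx⟩ := hX k
    exact ⟨f x, ⟨x, hxX, rfl⟩, le_trans hk (hfmono hkx)⟩
  have hex : ∀ p : U', ∃ k : K, g k ⊆ (OrderDual.ofDual p).1 :=
    fun p => hgcof _ (OrderDual.ofDual p).2
  let hmap : U' → K := fun p => (hex p).choose
  have tukey2 : TukeyLE K U' := by
    refine ⟨hmap, ?_⟩
    intro X hX k0
    obtain ⟨x, hxX, hfx⟩ := hX (f k0)
    refine ⟨hmap x, ⟨x, hxX, rfl⟩, ?_⟩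
    have hsub2 : g (hmap x) ⊆ g k0 := by
      have h1 : g (hmap x) ⊆ (OrderDual.ofDual x).1 := (hex x).choose_spec
      have h2 : (OrderDual.ofDual x).1 ⊆ g k0 := hfx
      exact h1.trans h2
    rw [Prod.le_def]
    constructor
    · have hc1 : c (hmap x).1 ∈ g (hmap x) := by
        constructor
        · exact Set.mem_Ici.mpr le_rfl
        · intro hmem
          obtain ⟨α, hh, hle⟩ := (hmemcones (hmap x).2 (c (hmap x).1)).mp hmem
          exact absurd hle (not_le_of_gt (htC α _ _ (hcC _)))
      have hcd : c k0.1 ≤ c (hmap x).1 := (hsub2 hc1).1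
      exact (hcmono.le_iff_le).mp hcd
    · intro α
      by_cases h0 : k0.2.1 α = 0
      · exact (le_of_eq h0).trans zero_le
      · have hpnot : t α (dec k0.2 α h0) ∉ g k0 := by
          intro hp
          exact hp.2 ((hmemcones k0.2 _).mpr ⟨α, h0, le_rfl⟩)
        have hpIci : c (hmap x).1 ≤ t α (dec k0.2 α h0) := (htC α _ _ (hcC _)).le
        have hpu : t α (dec k0.2 α h0) ∈ (⋃ b ∈ coneF (hmap x).2, Set.Ici b) := by
          by_contra hnc
          exact hpnot (hsub2 ⟨hpIci, hnc⟩)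
        obtain ⟨α', h', hle'⟩ := (hmemcones _ _).mp hpu
        have hαα : α' = α := by
          by_contra hne
          exact (hfan.incomp α' α hne _ _).1 hle'
        subst hαα
        have hdec : dec k0.2 α' h0 ≤ dec (hmap x).2 α' h' :=
          (hfan.strictAnti α').le_iff_ge.mp hle'
        exact (decodeβ_le_decodeβ _ _ _ _).mp hdec
  refine ⟨⟨tukey1, tukey2⟩, ⟨setCof (Cuf U), lam.ord.ToType, (fun α => 1 + θ α), ?_, ?_,
    ⟨tukey1, tukey2⟩⟩⟩
  · rcases setCof_eq_one_or_infinite hCchain hbot with h | h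
    · exact Or.inl h
    · exact Or.inr ⟨h, setCof_regular_of_infinite hCchain hbot h⟩
  · intro α
    show (1 + θ α = 2) ∨ (ℵ₀ ≤ 1 + θ α ∧ (1 + θ α).IsRegular)
    rcases hfan.theta α with h | ⟨hinf, hreg⟩
    · left
      rw [h]
      exact one_add_one_eq_two
    · right
      have h1 : 1 + θ α = θ α := Cardinal.add_eq_right hinf
        (le_trans Cardinal.one_lt_aleph0.le hinf)
      rw [h1]
      exact ⟨hinf, hreg⟩
end

section
/- Let κ be an infinite cardinal and let T be a pseudo-tree with a least element with |T| = κ. If there exist an initial chain C ⊆ T and a κ-fan {s^α_β : α < κ, β < θ_α} above C such that the set {α < κ : θ_α = 1} has cardinality κ, then Treealg T has an ultrafilter U with (U,⊇) ≡_T ([κ]^{<ω},⊆). -/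
open Cardinal

universe u

namespace S19
variable {X : Type*} {G : Set (Set X)}

lemma gen_subset : G ⊆ genBoolAlg G := fun _ hg => Set.mem_sInter.2 fun _ hB => hB.1 hg
lemma gen_empty : ∅ ∈ genBoolAlg G := Set.mem_sInter.2 fun _ hB => hB.2.1
lemma gen_compl {u : Set X} (hu : u ∈ genBoolAlg G) : uᶜ ∈ genBoolAlg G :=
  Set.mem_sInter.2 fun B hB => hB.2.2.1 u (Set.mem_sInter.1 hu B hB)
lemma gen_inter {u v : Set X} (hu : u ∈ genBoolAlg G) (hv : v ∈ genBoolAlg G) :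
    u ∩ v ∈ genBoolAlg G :=
  Set.mem_sInter.2 fun B hB =>
    hB.2.2.2 u (Set.mem_sInter.1 hu B hB) v (Set.mem_sInter.1 hv B hB)
lemma gen_univ : (Set.univ : Set X) ∈ genBoolAlg G := by
  have := gen_compl (gen_empty (G := G)); rwa [Set.compl_empty] at this
lemma gen_min {B : Set (Set X)} (hGB : G ⊆ B) (h0 : ∅ ∈ B) (hc : ∀ s ∈ B, sᶜ ∈ B)
    (hi : ∀ s ∈ B, ∀ t ∈ B, s ∩ t ∈ B) : genBoolAlg G ⊆ B :=
  fun _ hu => Set.mem_sInter.1 hu B ⟨hGB, h0, hc, hi⟩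
lemma gen_mono {G' : Set (Set X)} (h : G ⊆ G') : genBoolAlg G ⊆ genBoolAlg G' :=
  gen_min (h.trans gen_subset) gen_empty (fun _ => gen_compl) (fun _ hs _ ht => gen_inter hs ht)

lemma gen_finite_gen {u : Set X} (hu : u ∈ genBoolAlg G) :
    ∃ G₀ ⊆ G, G₀.Finite ∧ u ∈ genBoolAlg G₀ := by
  refine gen_min (B := {u | ∃ G₀ ⊆ G, G₀.Finite ∧ u ∈ genBoolAlg G₀}) ?_ ?_ ?_ ?_ hu
  · exact fun g hg => ⟨{g}, Set.singleton_subset_iff.2 hg, Set.finite_singleton g,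
      gen_subset rfl⟩
  · exact ⟨∅, Set.empty_subset _, Set.finite_empty, gen_empty⟩
  · rintro s ⟨G₀, hG₀, hfin, hs⟩; exact ⟨G₀, hG₀, hfin, gen_compl hs⟩
  · rintro s ⟨G₀, hG₀, hf₀, hs⟩ t ⟨G₁, hG₁, hf₁, ht⟩
    exact ⟨G₀ ∪ G₁, Set.union_subset hG₀ hG₁, hf₀.union hf₁,
      gen_inter (gen_mono Set.subset_union_left hs) (gen_mono Set.subset_union_right ht)⟩

lemma gen_pattern {u : Set X} (hu : u ∈ genBoolAlg G) :
    ∀ x y, (∀ g ∈ G, x ∈ g ↔ y ∈ g) → (x ∈ u ↔ y ∈ u) := by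
  refine gen_min (B := {u | ∀ x y, (∀ g ∈ G, x ∈ g ↔ y ∈ g) → (x ∈ u ↔ y ∈ u)}) ?_ ?_ ?_ ?_ hu
  · exact fun g hg x y h => h g hg
  · exact fun x y _ => Iff.rfl
  · exact fun s hs x y h => not_congr (hs x y h)
  · exact fun s hs t ht x y h => and_congr (hs x y h) (ht x y h)

lemma gen_finite (hG : G.Finite) : (genBoolAlg G).Finite := by
  have hGsub : Finite ↥G := hG.to_subtype
  set Φ : Set X → Set (Set ↥G) :=
    fun u => {S | ∃ x ∈ u, ∀ g : ↥G, g ∈ S ↔ x ∈ (g : Set X)} with hΦ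
  have hinj : Set.InjOn Φ (genBoolAlg G) := by
    intro u hu v hv huv
    ext x
    constructor
    · intro hx
      have : {g : ↥G | x ∈ (g : Set X)} ∈ Φ u := ⟨x, hx, fun g => Iff.rfl⟩
      rw [huv] at this
      obtain ⟨y, hy, hxy⟩ := this
      exact (gen_pattern hv x y (fun g hg => by
        have := hxy ⟨g, hg⟩; simpa using this)).2 hy
    · intro hx
      have : {g : ↥G | x ∈ (g : Set X)} ∈ Φ v := ⟨x, hx, fun g => Iff.rfl⟩
      rw [← huv] at this
      obtain ⟨y, hy, hxy⟩ := this
      exact (gen_pattern hu x y (fun g hg => by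
        have := hxy ⟨g, hg⟩; simpa using this)).2 hy
  exact Set.Finite.of_finite_image (Set.toFinite _) hinj

lemma gen_biInter {ι : Type*} {K : Set ι} (hK : K.Finite) {f : ι → Set X}
    (hf : ∀ p ∈ K, f p ∈ genBoolAlg G) : (⋂ p ∈ K, f p) ∈ genBoolAlg G := by
  revert hf
  refine Set.Finite.induction_on K hK ?_ ?_
  · intro _; simpa using gen_univ
  · intro a K' _ _ ih hf
    rw [Set.biInter_insert]
    exact gen_inter (hf a (Set.mem_insert a K'))
      (ih fun p hp => hf p (Set.mem_insert_of_mem a hp))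

lemma chain_ub {T : Type*} [Preorder T] {C : Set T} (hC : IsChain (· ≤ ·) C)
    (hCne : C.Nonempty) {S : Set T} (hS : S.Finite) :
    S ⊆ C → ∃ c ∈ C, ∀ x ∈ S, x ≤ c := by
  refine Set.Finite.induction_on S hS ?_ ?_
  · intro _; obtain ⟨c, hc⟩ := hCne; exact ⟨c, hc, by simp⟩
  · intro a S' _ _ ih hsub
    obtain ⟨c, hcC, hc⟩ := ih ((Set.subset_insert a S').trans hsub)
    have haC : a ∈ C := hsub (Set.mem_insert a S')
    rcases eq_or_ne a c with rfl | hne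
    · exact ⟨a, haC, fun x hx => by
        rcases Set.mem_insert_iff.1 hx with rfl | hx
        · exact le_refl x
        · exact hc x hx⟩
    rcases hC.total haC hcC with h | h
    · exact ⟨c, hcC, fun x hx => by
        rcases Set.mem_insert_iff.1 hx with rfl | hx
        · exact h
        · exact hc x hx⟩
    · exact ⟨a, haC, fun x hx => by
        rcases Set.mem_insert_iff.1 hx with rfl | hx
        · exact le_refl x
        · exact (hc x hx).trans h⟩

variable {T : Type*} [PartialOrder T]

lemma treealg_Ici (t : T) : Set.Ici t ∈ treealg T := gen_subset ⟨t, rfl⟩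

lemma treealg_decomp {u : Set T} (hu : u ∈ treealg T) :
    ∃ G₀ : Set T, G₀.Finite ∧ u ∈ genBoolAlg (Set.Ici '' G₀) := by
  obtain ⟨S₀, hS₀sub, hS₀fin, huS₀⟩ := gen_finite_gen hu
  refine ⟨Set.Ici ⁻¹' S₀, hS₀fin.preimage (Set.Ici_injective.injOn), ?_⟩
  refine Set.mem_of_subset_of_mem (gen_mono ?_) huS₀
  intro g hg
  obtain ⟨t, rfl⟩ := hS₀sub hg
  exact ⟨t, hg, rfl⟩

lemma gen_pattern' {G₀ : Set T} {u : Set T} (hu : u ∈ genBoolAlg (Set.Ici '' G₀)) :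
    ∀ x y, (∀ t ∈ G₀, (t ≤ x ↔ t ≤ y)) → (x ∈ u ↔ y ∈ u) := by
  intro x y h
  refine gen_pattern hu x y ?_
  rintro g ⟨t, ht, rfl⟩
  exact h t ht

lemma treealg_card (hinf : Infinite T) : #(treealg T) ≤ #T := by
  have hsub : treealg T ⊆ ⋃ F : Finset T, genBoolAlg (Set.Ici '' (↑F : Set T)) := by
    intro u hu
    obtain ⟨G₀, hG₀, hu'⟩ := treealg_decomp hu
    exact Set.mem_iUnion.2 ⟨hG₀.toFinset, by rwa [Set.Finite.coe_toFinset]⟩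
  calc #(treealg T) ≤ #(⋃ F : Finset T, genBoolAlg (Set.Ici '' (↑F : Set T))) :=
        Cardinal.mk_le_mk_of_subset hsub
    _ ≤ #(Finset T) * ⨆ F : Finset T, #(genBoolAlg (Set.Ici '' (↑F : Set T))) :=
        Cardinal.mk_iUnion_le _
    _ ≤ #(Finset T) * ℵ₀ := by
        refine mul_le_mul_right (ciSup_le' fun F => ?_) _
        exact ((gen_finite ((F.finite_toSet).image _)).lt_aleph0).le
    _ = #T * ℵ₀ := by rw [Cardinal.mk_finset_of_infinite]
    _ = #T := Cardinal.mul_eq_left (Cardinal.infinite_iff.mp hinf)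
        (Cardinal.infinite_iff.mp hinf) Cardinal.aleph0_ne_zero

end S19

/-- Let `κ` be infinite and `T` a pseudo-tree with a least element with
`|T| = κ`.  If some initial chain `C ⊆ T` carries a `κ`-fan `(s α β)` above it in which
`κ`-many of the cardinals `θ α` equal `1`, then `Treealg T` has an ultrafilter of
maximal type `([κ]^{<ω},⊆)`. -/
theorem stmt19 (κ : Cardinal.{u}) (hκ : ℵ₀ ≤ κ) {T : Type u} [PartialOrder T] [OrderBot T]
    (hpt : ∀ x : T, IsChain (· ≤ ·) {s : T | s ≤ x}) (hT : #T = κ)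
    (C : Set T) (hCne : C.Nonempty) (hCchain : IsChain (· ≤ ·) C) (hClower : IsLowerSet C)
    (θ : κ.ord.ToType → Cardinal.{u})
    (s : (α : κ.ord.ToType) → (θ α).ord.ToType → T)
    (hfan : IsLambdaFan C κ θ s)
    (hones : #↥{α : κ.ord.ToType | θ α = 1} = κ) :
    ∃ U : SetUltrafilter (treealg T),
      TukeyEquiv ((↥U.carrier)ᵒᵈ) (Finset κ.ord.ToType) := by
  classical
  obtain ⟨c₀, hc₀⟩ := hCne
  have hTinf : Infinite T := Cardinal.infinite_iff.mpr (hT ▸ hκ)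
  have hκ0 : κ ≠ 0 := fun h => by rw [h] at hκ; exact Cardinal.aleph0_ne_zero (le_zero_iff.mp hκ)
  have hκOTne : Nonempty κ.ord.ToType := Ordinal.toType_nonempty_iff_ne_zero.mpr (fun h => by
    apply_fun Ordinal.card at h
    rw [Cardinal.card_ord] at h
    simp at h
    exact hκ0 h)
  have hne : ∀ α, Nonempty ((θ α).ord.ToType) := by
    intro α
    refine Ordinal.toType_nonempty_iff_ne_zero.mpr (fun h => ?_)
    apply_fun Ordinal.card at h
    rw [Cardinal.card_ord] at h
    simp at h
    rcases hfan.theta α with h1 | ⟨h1, _⟩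
    · rw [h] at h1; exact one_ne_zero h1.symm
    · rw [h] at h1; exact Cardinal.aleph0_ne_zero (le_zero_iff.mp h1)
  have hAinf : {α : κ.ord.ToType | θ α = 1}.Infinite := by
    rw [← Set.infinite_coe_iff]
    exact Cardinal.infinite_iff.mpr (by rw [hones]; exact hκ)
  let bb : ∀ α, (θ α).ord.ToType := fun α => (hne α).some
  -- the base sets
  let base : T → Set ((α : κ.ord.ToType) × (θ α).ord.ToType) → Set T := fun c K =>
    Set.Ici c ∩ ⋂ p ∈ K, (Set.Ici (s p.1 p.2))ᶜ
  have hbase_treealg : ∀ c K, K.Finite → base c K ∈ treealg T := fun c K hK =>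
    S19.gen_inter (S19.treealg_Ici c)
      (S19.gen_biInter hK (fun p _ => S19.gen_compl (S19.treealg_Ici _)))
  have hbase_ne : ∀ c ∈ C, ∀ K : Set ((α : κ.ord.ToType) × (θ α).ord.ToType),
      K.Finite → (base c K).Nonempty := by
    intro c hc K hK
    obtain ⟨α, hαA, hαK⟩ := (hAinf.diff (hK.image Sigma.fst)).nonempty
    refine ⟨s α (bb α), (hfan.above α _ c hc).le, ?_⟩
    simp only [Set.mem_iInter, Set.mem_compl_iff, Set.mem_Ici]
    intro p hp hle
    have hne' : p.1 ≠ α := fun h => hαK ⟨p, hp, h⟩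
    exact (hfan.incomp p.1 α hne' p.2 (bb α)).1 hle
  have hbase_mono : ∀ c c', c ≤ c' → ∀ K K' : Set ((α : κ.ord.ToType) × (θ α).ord.ToType),
      K ⊆ K' → base c' K' ⊆ base c K := by
    intro c c' hcc K K' hKK x hx
    obtain ⟨hx1, hx2⟩ := hx
    refine ⟨hcc.trans hx1, ?_⟩
    exact Set.mem_of_subset_of_mem (Set.biInter_subset_biInter_left hKK) hx2
  -- the base filter
  set F₀ : Set (Set T) := {u | u ∈ treealg T ∧
    ∃ c ∈ C, ∃ K : Set ((α : κ.ord.ToType) × (θ α).ord.ToType), K.Finite ∧ base c K ⊆ u}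
    with hF₀def
  have hF₀base : ∀ c ∈ C, ∀ K : Set ((α : κ.ord.ToType) × (θ α).ord.ToType),
      K.Finite → base c K ∈ F₀ := fun c hc K hK =>
    ⟨hbase_treealg c K hK, c, hc, K, hK, subset_rfl⟩
  -- the Zorn family
  set Fam : Set (Set (Set T)) := {F | F₀ ⊆ F ∧ F ⊆ treealg T ∧ ∅ ∉ F ∧
    (∀ a ∈ F, ∀ b ∈ F, a ∩ b ∈ F) ∧ (∀ a ∈ F, ∀ b ∈ treealg T, a ⊆ b → b ∈ F)} with hFamdef
  have hF₀Fam : F₀ ∈ Fam := by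
    refine ⟨subset_rfl, fun u hu => hu.1, ?_, ?_, ?_⟩
    · rintro ⟨-, c, hc, K, hK, hsub⟩
      obtain ⟨x, hx⟩ := hbase_ne c hc K hK
      exact hsub hx
    · rintro a ⟨ha, c, hc, K, hK, hsub⟩ b ⟨hb, c', hc', K', hK', hsub'⟩
      refine ⟨S19.gen_inter ha hb, ?_⟩
      rcases eq_or_ne c c' with rfl | hcc
      · exact ⟨c, hc, K ∪ K', hK.union hK', fun x hx =>
          ⟨hsub (hbase_mono c c le_rfl K (K ∪ K') Set.subset_union_left hx),
           hsub' (hbase_mono c c le_rfl K' (K ∪ K') Set.subset_union_right hx)⟩⟩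
      rcases hCchain hc hc' hcc with h | h
      · exact ⟨c', hc', K ∪ K', hK.union hK', fun x hx =>
          ⟨hsub (hbase_mono c c' h K (K ∪ K') Set.subset_union_left hx),
           hsub' (hbase_mono c' c' le_rfl K' (K ∪ K') Set.subset_union_right hx)⟩⟩
      · exact ⟨c, hc, K ∪ K', hK.union hK', fun x hx =>
          ⟨hsub (hbase_mono c c le_rfl K (K ∪ K') Set.subset_union_left hx),
           hsub' (hbase_mono c' c h K' (K ∪ K') Set.subset_union_right hx)⟩⟩
    · rintro a ⟨ha, c, hc, K, hK, hsub⟩ b hb hab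
      exact ⟨hb, c, hc, K, hK, hsub.trans hab⟩
  obtain ⟨M, hF₀M, hMmax⟩ := zorn_subset_nonempty Fam (by
    intro ch hchFam hch hchne
    obtain ⟨F1, hF1⟩ := hchne
    refine ⟨⋃₀ ch, ⟨(hchFam hF1).1.trans (Set.subset_sUnion_of_mem hF1),
      Set.sUnion_subset fun F hF => (hchFam hF).2.1, ?_, ?_, ?_⟩,
      fun F hF => Set.subset_sUnion_of_mem hF⟩
    · rintro ⟨F, hF, h0⟩
      exact (hchFam hF).2.2.1 h0
    · rintro a ⟨Fa, hFa, ha⟩ b ⟨Fb, hFb, hb⟩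
      rcases eq_or_ne Fa Fb with rfl | hne'
      · exact ⟨Fa, hFa, (hchFam hFa).2.2.2.1 a ha b hb⟩
      rcases hch hFa hFb hne' with h | h
      · exact ⟨Fb, hFb, (hchFam hFb).2.2.2.1 a (h ha) b hb⟩
      · exact ⟨Fa, hFa, (hchFam hFa).2.2.2.1 a ha b (h hb)⟩
    · rintro a ⟨Fa, hFa, ha⟩ b hb hab
      exact ⟨Fa, hFa, (hchFam hFa).2.2.2.2 a ha b hb hab⟩) F₀ hF₀Fam
  have hMFam : M ∈ Fam := hMmax.prop
  obtain ⟨-, hMsub, hM0, hMint, hMup⟩ := hMFam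
  have hIciM : Set.Ici c₀ ∈ M := hF₀M ⟨S19.treealg_Ici c₀, c₀, hc₀, ∅, Set.finite_empty,
    Set.inter_subset_left⟩
  -- ultrafilter property
  have hUF : ∀ b ∈ treealg T, b ∈ M ∨ bᶜ ∈ M := by
    intro b hb
    by_cases hbM : b ∈ M
    · exact Or.inl hbM
    by_cases hdisj : ∃ u ∈ M, u ∩ b = ∅
    · obtain ⟨u, huM, hub⟩ := hdisj
      refine Or.inr (hMup u huM bᶜ (S19.gen_compl hb) ?_)
      intro x hx hxb
      rw [Set.eq_empty_iff_forall_notMem] at hub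
      exact hub x ⟨hx, hxb⟩
    · exfalso
      push_neg at hdisj
      set M' : Set (Set T) := {w | w ∈ treealg T ∧ ∃ u ∈ M, u ∩ b ⊆ w} with hM'def
      have hMM' : M ⊆ M' := fun u hu => ⟨hMsub hu, u, hu, Set.inter_subset_left⟩
      have hM'Fam : M' ∈ Fam := by
        refine ⟨hF₀M.trans hMM', fun w hw => hw.1, ?_, ?_, ?_⟩
        · rintro ⟨-, u, huM, hsub⟩
          obtain ⟨x, hx⟩ := hdisj u huM
          simpa using hsub hx
        · rintro w ⟨hw, u, hu, h1⟩ w' ⟨hw', u', hu', h2⟩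
          exact ⟨S19.gen_inter hw hw', u ∩ u', hMint u hu u' hu',
            fun x hx => ⟨h1 ⟨hx.1.1, hx.2⟩, h2 ⟨hx.1.2, hx.2⟩⟩⟩
        · rintro w ⟨hw, u, hu, h1⟩ b' hb' hwb
          exact ⟨hb', u, hu, h1.trans hwb⟩
      have hbM' : b ∈ M' := ⟨hb, Set.Ici c₀, hIciM, Set.inter_subset_right⟩
      exact hbM (hMmax.2 hM'Fam hMM' hbM')
  -- cardinality and surjection
  have hMcard : #↥M ≤ #(κ.ord.ToType) := by
    rw [Cardinal.mk_ord_toType]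
    calc #↥M ≤ #↥(treealg T) := Cardinal.mk_le_mk_of_subset hMsub
      _ ≤ #T := S19.treealg_card hTinf
      _ = κ := hT
  obtain ⟨i⟩ : Nonempty (↥M ↪ κ.ord.ToType) := (Cardinal.le_def _ _).mp hMcard
  have hMne : Nonempty ↥M := ⟨⟨Set.Ici c₀, hIciM⟩⟩
  let g : κ.ord.ToType → ↥M := Function.invFun i
  have hgs : Function.Surjective g := Function.invFun_surjective i.injective
  -- finite intersections over finsets
  have hIF : ∀ F : Finset κ.ord.ToType,
      (Set.Ici c₀ ∩ ⋂ α ∈ F, ((g α : ↥M) : Set T)) ∈ M := by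
    intro F
    induction F using Finset.induction_on with
    | empty => simpa using hIciM
    | @insert a F ha ih =>
      rw [Finset.set_biInter_insert, Set.inter_left_comm]
      exact hMint _ (g a).2 _ ih
  -- the big finiteness lemma
  have hfin : ∀ u ∈ M, {α : κ.ord.ToType | ∃ β, u ∩ Set.Ici (s α β) = ∅}.Finite := by
    intro u huM
    obtain ⟨G₀, hG₀fin, huG₀⟩ := S19.treealg_decomp (hMsub huM)
    have happrox : ∀ t : T, ∃ α : κ.ord.ToType, ∃ β : (θ α).ord.ToType,
        (∀ c ∈ C, c < t) → s α β ≤ t := by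
      intro t
      by_cases ht : ∀ c ∈ C, c < t
      · obtain ⟨α, β, h⟩ := hfan.approx t ht; exact ⟨α, β, fun _ => h⟩
      · exact ⟨hκOTne.some, bb _, fun h => absurd h ht⟩
    choose αw βw hw using happrox
    have hcv : ∀ t : T, ∃ c, c ∈ C ∧ ((¬ ∀ c' ∈ C, c' < t) → ¬ c < t) := by
      intro t
      by_cases ht : ∀ c' ∈ C, c' < t
      · exact ⟨c₀, hc₀, fun h => absurd ht h⟩
      · push_neg at ht
        obtain ⟨c, hc, hcl⟩ := ht
        exact ⟨c, hc, fun _ => hcl⟩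
    choose cw hcwC hcw using hcv
    have hEfin : (αw '' {t ∈ G₀ | ∀ c ∈ C, c < t}).Finite :=
      (hG₀fin.subset (Set.sep_subset G₀ (fun t => ∀ c ∈ C, c < t))).image αw
    refine Set.Finite.subset hEfin ?_
    intro α₀ hα₀
    obtain ⟨β₀, hβ₀⟩ := hα₀
    by_contra hnE
    obtain ⟨cstar, hcsC, hcs⟩ := S19.chain_ub hCchain ⟨c₀, hc₀⟩ (hG₀fin.image cw)
      (by rintro x ⟨t, ht, rfl⟩; exact hcwC t)
    set Ka : Set ((α : κ.ord.ToType) × (θ α).ord.ToType) :=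
      (fun t => ⟨αw t, βw t⟩) '' {t ∈ G₀ | ∀ c ∈ C, c < t} with hKadef
    have hKafin : Ka.Finite := (hG₀fin.subset (Set.sep_subset _ _)).image _
    have hbM : base cstar Ka ∈ M := hF₀M (hF₀base cstar hcsC Ka hKafin)
    have hub : u ∩ base cstar Ka ∈ M := hMint u huM _ hbM
    have hempty : u ∩ base cstar Ka = ∅ := by
      rw [Set.eq_empty_iff_forall_notMem]
      rintro x ⟨hxu, hxc, hxK⟩
      have hpat := S19.gen_pattern' huG₀ x (s α₀ β₀) ?_
      · have hs0 : s α₀ β₀ ∉ u := fun h => by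
          rw [Set.eq_empty_iff_forall_notMem] at hβ₀
          exact hβ₀ (s α₀ β₀) ⟨h, le_refl _⟩
        exact hs0 (hpat.1 hxu)
      · intro t htG₀
        by_cases ht : ∀ c ∈ C, c < t
        · have hKt : (⟨αw t, βw t⟩ : (α : κ.ord.ToType) × (θ α).ord.ToType) ∈ Ka :=
            ⟨t, ⟨htG₀, ht⟩, rfl⟩
          have hxnot : x ∉ Set.Ici (s (αw t) (βw t)) := by
            have h := Set.mem_iInter₂.1 hxK _ hKt
            exact h
          have hαne : αw t ≠ α₀ := fun h => hnE ⟨t, ⟨htG₀, ht⟩, h⟩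
          refine iff_of_false ?_ ?_
          · intro hle; exact hxnot ((hw t ht).trans hle)
          · intro hle; exact (hfan.incomp (αw t) α₀ hαne (βw t) β₀).1 ((hw t ht).trans hle)
        · have hcwt := hcw t ht
          have hcwle : cw t ≤ cstar := hcs _ (Set.mem_image_of_mem cw htG₀)
          by_cases htc : t ≤ cw t
          · exact iff_of_true (htc.trans (hcwle.trans hxc))
              (htc.trans (hfan.above α₀ β₀ _ (hcwC t)).le)
          · have hcnt : ¬ cw t ≤ t := by
              intro h
              rcases h.lt_or_eq with h' | h'
              · exact hcwt h'
              · exact htc (le_of_eq h'.symm)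
            refine iff_of_false ?_ ?_
            · intro hle
              rcases (hpt x).total (hle : t ∈ {s | s ≤ x})
                ((hcwle.trans hxc : cw t ≤ x) : cw t ∈ {s | s ≤ x}) with h | h
              · exact htc h
              · exact hcnt h
            · intro hle
              rcases (hpt (s α₀ β₀)).total (hle : t ∈ {s' | s' ≤ s α₀ β₀})
                (((hfan.above α₀ β₀ _ (hcwC t)).le : cw t ≤ s α₀ β₀) :
                  cw t ∈ {s' | s' ≤ s α₀ β₀}) with h | h
              · exact htc h
              · exact hcnt h
    rw [hempty] at hub
    exact hM0 hub
  -- assemble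
  refine ⟨⟨M, hMsub, hM0, hMint, hMup, hUF⟩, ⟨?_, ?_⟩⟩
  · -- TukeyLE (↥M)ᵒᵈ (Finset κ.ord.ToType)
    refine ⟨fun F => OrderDual.toDual ⟨_, hIF F⟩, ?_⟩
    intro X hX p
    obtain ⟨α, hα⟩ := hgs (OrderDual.ofDual p)
    obtain ⟨F, hFX, hF⟩ := hX {α}
    refine ⟨_, Set.mem_image_of_mem _ hFX, ?_⟩
    have hαF : α ∈ F := hF (Finset.mem_singleton_self α)
    show ((⟨_, hIF F⟩ : ↥M) : Set T) ⊆ ((OrderDual.ofDual p : ↥M) : Set T)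
    rw [← hα]
    exact Set.inter_subset_right.trans (Set.biInter_subset_of_mem hαF)
  · -- TukeyLE (Finset κ.ord.ToType) (↥M)ᵒᵈ
    refine ⟨fun v => (hfin (OrderDual.ofDual v : ↥M).1 (OrderDual.ofDual v : ↥M).2).toFinset, ?_⟩
    intro X hX F
    set K : Set ((α : κ.ord.ToType) × (θ α).ord.ToType) :=
      (fun α => (⟨α, bb α⟩ : (α : κ.ord.ToType) × (θ α).ord.ToType)) '' ↑F with hKdef
    have hKfin : K.Finite := F.finite_toSet.image _
    have hbFM : base c₀ K ∈ M := hF₀M (hF₀base c₀ hc₀ K hKfin)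
    obtain ⟨x, hxX, hx⟩ := hX (OrderDual.toDual ⟨base c₀ K, hbFM⟩)
    refine ⟨_, Set.mem_image_of_mem _ hxX, ?_⟩
    have hxb : ((OrderDual.ofDual x : ↥M) : Set T) ⊆ base c₀ K := hx
    intro α hαF
    rw [Set.Finite.mem_toFinset]
    refine ⟨bb α, ?_⟩
    rw [Set.eq_empty_iff_forall_notMem]
    rintro y ⟨hy1, hy2⟩
    have hyb := hxb hy1
    have hKmem : (⟨α, bb α⟩ : (α : κ.ord.ToType) × (θ α).ord.ToType) ∈ K :=
      ⟨α, hαF, rfl⟩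
    have := Set.mem_iInter₂.1 hyb.2 _ hKmem
    exact this hy2
end
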